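/- arXiv:2408.10344 — 5 statements merged into one kernel-verified Lean document; each statement's English description precedes it below -/
import Mathlib

section
/- Let (𝒢, ∂P) be a simple polygonal subdivision graph and let 𝒢̃ be its triangulation, obtained by adding for each non-triangular face F of ℛ(P) a new vertex w_F joined to every vertex of ∂F. Let a, b be two non-adjacent vertices on ∂P. Then EW_{𝒢̃}(Γ̃_{a,b}, ∂P) ≥ EW_𝒢(Γ_{a,b}, ∂P) and EW_{𝒢̃}(Γ̃*_{a,b}, ∂P) ≥ EW_𝒢(Γ*_{a,b}, ∂P). -/
open Set

noncomputable section

namespace DPG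

/-! ### Vertex extremal width -/

/-- A path in a graph: a list of vertices in which consecutive vertices are adjacent,
with no repeated vertices. -/
def IsPathIn {V : Type*} (G : SimpleGraph V) (γ : List V) : Prop :=
  γ.Chain' G.Adj ∧ γ.Nodup

/-- The interior vertices of a path (all but the two endpoints). -/
def interiorVerts {V : Type*} (γ : List V) : List V := γ.tail.dropLast

/-- A path is proper relative to a set `B` of boundary vertices if its endpoints lie in `B`
and its interior vertices avoid `B`. -/
def IsProperPath {V : Type*} (G : SimpleGraph V) (B : Set V) (γ : List V) : Prop :=
  IsPathIn G γ ∧ 2 ≤ γ.length ∧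
    (∀ x ∈ γ.head?, x ∈ B) ∧ (∀ x ∈ γ.getLast?, x ∈ B) ∧
    ∀ x ∈ interiorVerts γ, x ∉ B

/-- The family `Γ_{a,b}` of proper paths connecting `a` and `b`. -/
def connectingPaths {V : Type*} (G : SimpleGraph V) (B : Set V) (a b : V) : Set (List V) :=
  {γ | IsProperPath G B γ ∧ γ.head? = some a ∧ γ.getLast? = some b}

/-- The family of proper paths whose two endpoints satisfy a given separation
predicate `sep` (used for the family `Γ*_{a,b}` of separating paths). -/
def separatingPaths {V : Type*} (G : SimpleGraph V) (B : Set V) (sep : V → V → Prop) :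
    Set (List V) :=
  {γ | IsProperPath G B γ ∧ ∃ u v, γ.head? = some u ∧ γ.getLast? = some v ∧ sep u v}

/-- The length of a path with respect to a vertex metric. -/
def pathLen {V : Type*} (μ : V → ℝ) (γ : List V) : ℝ := (γ.map μ).sum

/-- A vertex metric `μ` is `Γ`-admissible relative to `W` if it is nonnegative,
every path in `Γ` has `μ`-length at least 1, and `μ` vanishes on `W`. -/
def Admissible {V : Type*} (μ : V → ℝ) (Γ : Set (List V)) (W : Set V) : Prop :=
  (∀ v, 0 ≤ μ v) ∧ (∀ γ ∈ Γ, 1 ≤ pathLen μ γ) ∧ ∀ v ∈ W, μ v = 0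

/-- The area of a vertex metric. -/
def vertexArea {V : Type*} [Fintype V] (μ : V → ℝ) : ℝ := ∑ v, μ v ^ 2

/-- The relative vertex extremal width `EW(Γ, W)`. -/
def EW {V : Type*} [Fintype V] (Γ : Set (List V)) (W : Set V) : ℝ :=
  sInf {A | ∃ μ, Admissible μ Γ W ∧ A = vertexArea μ}

/-- An extremal admissible vertex metric. -/
def IsExtremal {V : Type*} [Fintype V] (μ : V → ℝ) (Γ : Set (List V)) (W : Set V) : Prop :=
  Admissible μ Γ W ∧ vertexArea μ = EW Γ W

/-! ### Plane graphs -/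

/-- A (simple) plane graph: a simple graph drawn in the plane `ℂ`, with vertices at
distinct points and edges realized by arcs which meet only at common endpoints. -/
structure PlaneGraph (V : Type*) where
  G : SimpleGraph V
  pos : V → ℂ
  pos_inj : Function.Injective pos
  arc : V → V → Set ℂ
  arc_symm : ∀ u v, arc u v = arc v u
  arc_param : ∀ ⦃u v⦄, G.Adj u v → ∃ f : ℝ → ℂ, ContinuousOn f (Icc 0 1) ∧
      InjOn f (Icc 0 1) ∧ f 0 = pos u ∧ f 1 = pos v ∧ arc u v = f '' Icc 0 1
  arc_meet : ∀ ⦃u v u' v'⦄, G.Adj u v → G.Adj u' v' →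
      ¬((u = u' ∧ v = v') ∨ (u = v' ∧ v = u')) →
      arc u v ∩ arc u' v' ⊆ range pos
  arc_vertex : ∀ ⦃u v⦄, G.Adj u v → ∀ w, pos w ∈ arc u v → w = u ∨ w = v

/-- The subset of the plane occupied by (the drawing of) a plane graph. -/
def PlaneGraph.image {V : Type*} (Γ : PlaneGraph V) : Set ℂ :=
  range Γ.pos ∪ ⋃ (u) (v) (_ : Γ.G.Adj u v), Γ.arc u v

/-! ### Polygonal subdivision graphs -/

/-- A (simple) polygonal subdivision graph `(𝒢, ∂P)`: the 1-skeleton of a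
polygonal subdivision `ℛ(P)` of a polygon `P`, drawn in the plane.  The boundary
`∂P` is a cycle `bd 0, bd 1, …` of length `m ≥ 3` whose arcs form the frontier of the
region `P`; the `2`-cells of the subdivision are the faces `face j`, which are exactly
the connected components of `int P` minus the drawing of the graph, each bounded by the
cycle `fbd j 0, fbd j 1, …` of length `fm j` in the graph. -/
structure PolygonalSubdivision (V : Type*) extends PlaneGraph V where
  m : ℕ
  three_le_m : 3 ≤ m
  bd : ZMod m → V
  bd_inj : Function.Injective bd
  bd_adj : ∀ i, G.Adj (bd i) (bd (i + 1))
  P : Set ℂ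
  P_compact : IsCompact P
  P_regular : P = closure (interior P)
  image_subset_P : PlaneGraph.image toPlaneGraph ⊆ P
  frontier_P : frontier P = ⋃ i, arc (bd i) (bd (i + 1))
  nf : ℕ
  two_le_nf : 2 ≤ nf
  fm : Fin nf → ℕ
  three_le_fm : ∀ j, 3 ≤ fm j
  fbd : (j : Fin nf) → ZMod (fm j) → V
  fbd_inj : ∀ j, Function.Injective (fbd j)
  fbd_adj : ∀ j i, G.Adj (fbd j i) (fbd j (i + 1))
  face : Fin nf → Set ℂ
  face_inj : Function.Injective face
  face_component : ∀ j, ∃ x ∈ interior P \ PlaneGraph.image toPlaneGraph,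
      face j = connectedComponentIn (interior P \ PlaneGraph.image toPlaneGraph) x
  face_cover : interior P \ PlaneGraph.image toPlaneGraph ⊆ ⋃ j, face j
  face_frontier : ∀ j, frontier (face j) = ⋃ i, arc (fbd j i) (fbd j (i + 1))

namespace PolygonalSubdivision

variable {V : Type*}

/-- The set of vertices on the boundary polygon `∂P`. -/
def bdryVerts (S : PolygonalSubdivision V) : Set V := range S.bd

/-- The set of vertices on the boundary of the face `j`. -/
def faceVerts (S : PolygonalSubdivision V) (j : Fin S.nf) : Set V := range (S.fbd j)

/-- The subdivision complexity `𝒞(𝒢, ∂P)`: the maximal number of vertices of a face. -/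
def complexity (S : PolygonalSubdivision V) : ℕ := Finset.univ.sup S.fm

/-- Two boundary vertices `u, v` lie in the two different connected components of
`∂P − {a, b}`. -/
def Separates (S : PolygonalSubdivision V) (a b u v : V) : Prop :=
  u ∈ S.bdryVerts ∧ v ∈ S.bdryVerts ∧ u ≠ a ∧ u ≠ b ∧ v ≠ a ∧ v ≠ b ∧
    connectedComponentIn (frontier S.P \ {S.pos a, S.pos b}) (S.pos u) ≠
      connectedComponentIn (frontier S.P \ {S.pos a, S.pos b}) (S.pos v)

/-- The family `Γ_{a,b}` of proper paths in `𝒢` connecting `a` and `b`. -/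
def connFam (S : PolygonalSubdivision V) (a b : V) : Set (List V) :=
  connectingPaths S.G S.bdryVerts a b

/-- The family `Γ*_{a,b}` of proper paths in `𝒢` separating `a` and `b`, i.e. connecting
the two components of `∂P − {a, b}`. -/
def sepFam (S : PolygonalSubdivision V) (a b : V) : Set (List V) :=
  separatingPaths S.G S.bdryVerts (S.Separates a b)

end PolygonalSubdivision

end DPG

namespace DPG

open PolygonalSubdivision

variable {V : Type*}

/-- The non-triangular faces of a polygonal subdivision. -/
abbrev NTFace (S : PolygonalSubdivision V) : Type _ := {j : Fin S.nf // 4 ≤ S.fm j}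

/-- The underlying relation of the triangulation `𝒢̃`: the original adjacency, together
with an edge between the new vertex `w_F` of each non-triangular face `F` and every
vertex of `∂F`. -/
def tildeRel (S : PolygonalSubdivision V) :
    V ⊕ NTFace S → V ⊕ NTFace S → Prop
  | Sum.inl u, Sum.inl v => S.G.Adj u v
  | Sum.inl u, Sum.inr f => u ∈ S.faceVerts f.1
  | Sum.inr f, Sum.inl u => u ∈ S.faceVerts f.1
  | Sum.inr _, Sum.inr _ => False

/-- The triangulation `𝒢̃` of a polygonal subdivision graph `𝒢`, obtained by adding a new
vertex `w_F` for each non-triangular face `F`, joined to every vertex of `∂F`. -/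
def tildeGraph (S : PolygonalSubdivision V) : SimpleGraph (V ⊕ NTFace S) :=
  SimpleGraph.fromRel (tildeRel S)

/-- The boundary vertex set of `𝒢̃` (the boundary vertices of `𝒢`). -/
def tildeBdry (S : PolygonalSubdivision V) : Set (V ⊕ NTFace S) :=
  Sum.inl '' S.bdryVerts

/-- The family `Γ̃_{a,b}` of proper paths in `𝒢̃` connecting `a` and `b`. -/
def tildeConnFam (S : PolygonalSubdivision V) (a b : V) : Set (List (V ⊕ NTFace S)) :=
  connectingPaths (tildeGraph S) (tildeBdry S) (Sum.inl a) (Sum.inl b)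

/-- The family `Γ̃*_{a,b}` of proper paths in `𝒢̃` separating `a` and `b`. -/
def tildeSepFam (S : PolygonalSubdivision V) (a b : V) : Set (List (V ⊕ NTFace S)) :=
  separatingPaths (tildeGraph S) (tildeBdry S)
    (fun x y => ∃ u v, x = Sum.inl u ∧ y = Sum.inl v ∧ S.Separates a b u v)

end DPG

namespace DPG

open PolygonalSubdivision

variable {V : Type*}

lemma tilde_adj_inl {S : PolygonalSubdivision V} {u v : V} :
    (tildeGraph S).Adj (Sum.inl u) (Sum.inl v) ↔ S.G.Adj u v := by
  rw [tildeGraph, SimpleGraph.fromRel_adj]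
  constructor
  · rintro ⟨-, h | h⟩
    · exact h
    · exact h.symm
  · intro h
    exact ⟨by simpa using h.ne, Or.inl h⟩

lemma mem_tildeBdry_inl {S : PolygonalSubdivision V} {x : V} :
    Sum.inl x ∈ tildeBdry S ↔ x ∈ S.bdryVerts := by
  simp [tildeBdry, Sum.inl_injective.eq_iff]

lemma interiorVerts_map {α β : Type*} (f : α → β) (γ : List α) :
    interiorVerts (γ.map f) = (interiorVerts γ).map f := by
  simp [interiorVerts, ← List.map_tail, ← List.map_dropLast]

lemma forall_mem_map_option {α β : Type*} (f : α → β) (o : Option α) (P : β → Prop) :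
    (∀ x ∈ o.map f, P x) ↔ ∀ x ∈ o, P (f x) := by
  cases o <;> simp

lemma proper_map_iff {S : PolygonalSubdivision V} (γ : List V) :
    IsProperPath (tildeGraph S) (tildeBdry S) (γ.map Sum.inl) ↔
      IsProperPath S.G S.bdryVerts γ := by
  unfold IsProperPath IsPathIn List.Chain'
  rw [List.isChain_map, List.nodup_map_iff Sum.inl_injective, List.length_map,
    List.head?_map, List.getLast?_map, interiorVerts_map]
  simp only [tilde_adj_inl, forall_mem_map_option, mem_tildeBdry_inl]
  constructor
  · rintro ⟨h1, h2, h3, h4, h5⟩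
    refine ⟨h1, h2, h3, h4, fun x hx hxB => ?_⟩
    exact h5 _ (List.mem_map_of_mem hx) (mem_tildeBdry_inl.2 hxB)
  · rintro ⟨h1, h2, h3, h4, h5⟩
    refine ⟨h1, h2, h3, h4, ?_⟩
    rintro x hx hxB
    obtain ⟨y, hy, rfl⟩ := List.mem_map.1 hx
    exact h5 y hy (mem_tildeBdry_inl.1 hxB)

lemma pathLen_map_inl {S : PolygonalSubdivision V} (μ : V ⊕ NTFace S → ℝ) (γ : List V) :
    pathLen μ (γ.map Sum.inl) = pathLen (μ ∘ Sum.inl) γ := by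
  simp [pathLen, List.map_map]

lemma EW_le_aux [Fintype V] (S : PolygonalSubdivision V)
    (Γ : Set (List V)) (Γt : Set (List (V ⊕ NTFace S)))
    (h1 : ∀ γ ∈ Γ, γ.map Sum.inl ∈ Γt)
    (h2 : ∀ γ ∈ Γt, (∃ x ∈ γ, ∃ f, x = Sum.inr f) ∨ ∃ δ ∈ Γ, γ = δ.map Sum.inl) :
    EW Γ S.bdryVerts ≤ EW Γt (tildeBdry S) := by
  classical
  by_cases hA : {A | ∃ μ, Admissible μ Γt (tildeBdry S) ∧ A = vertexArea μ}.Nonempty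
  · rw [EW, EW]
    apply le_csInf hA
    rintro A ⟨μt, ⟨hpos, hlen, hzero⟩, rfl⟩
    have hadm : Admissible (μt ∘ Sum.inl) Γ S.bdryVerts := by
      refine ⟨fun v => hpos _, fun γ hγ => ?_, fun v hv => hzero _ ⟨v, hv, rfl⟩⟩
      rw [← pathLen_map_inl]
      exact hlen _ (h1 γ hγ)
    have harea : vertexArea (μt ∘ Sum.inl) ≤ vertexArea μt := by
      rw [vertexArea, vertexArea, Fintype.sum_sum_type]
      have h0 : (0:ℝ) ≤ ∑ f : NTFace S, μt (Sum.inr f) ^ 2 :=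
        Finset.sum_nonneg fun _ _ => sq_nonneg _
      simp only [Function.comp_apply]
      exact le_add_of_nonneg_right h0
    refine le_trans (csInf_le ⟨0, ?_⟩ ⟨_, hadm, rfl⟩) harea
    rintro A ⟨μ, _, rfl⟩
    exact Finset.sum_nonneg fun _ _ => sq_nonneg _
  · have h0 : EW Γt (tildeBdry S) = 0 := by
      rw [EW, Set.not_nonempty_iff_eq_empty.mp hA, Real.sInf_empty]
    have hGe : {A | ∃ μ, Admissible μ Γ S.bdryVerts ∧ A = vertexArea μ} = ∅ := by
      rw [Set.eq_empty_iff_forall_notMem]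
      rintro A ⟨μ, ⟨hpos, hlen, hzero⟩, rfl⟩
      apply hA
      refine ⟨vertexArea (Sum.elim μ fun _ => 1), Sum.elim μ fun _ => 1, ⟨?_, ?_, ?_⟩, rfl⟩
      · rintro (v | f)
        · exact hpos v
        · exact zero_le_one
      · intro γ hγ
        rcases h2 γ hγ with ⟨x, hx, f, rfl⟩ | ⟨δ, hδ, rfl⟩
        · have hmem : (Sum.elim μ fun _ => (1:ℝ)) (Sum.inr f) ∈ γ.map (Sum.elim μ fun _ => 1) :=
            List.mem_map_of_mem hx
          have hnn : ∀ y ∈ γ.map (Sum.elim μ fun _ => (1:ℝ)), 0 ≤ y := by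
            rintro y hy
            obtain ⟨z, hz, rfl⟩ := List.mem_map.1 hy
            rcases z with v | f
            · exact hpos v
            · exact zero_le_one
          have := List.single_le_sum hnn _ hmem
          simpa [pathLen] using this
        · rw [pathLen_map_inl]
          simpa using hlen δ hδ
      · rintro x ⟨v, hv, rfl⟩
        simpa using hzero v hv
    rw [EW, hGe, Real.sInf_empty, h0]

lemma h2_dichotomy {S : PolygonalSubdivision V} (γ : List (V ⊕ NTFace S)) (a : V) :
    (∃ x ∈ γ, ∃ f, x = Sum.inr f) ∨
      γ = (γ.map (Sum.elim id fun _ => a)).map Sum.inl ∧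
        ∀ x ∈ γ, ∃ y, x = Sum.inl y := by
  rcases Classical.em (∀ x ∈ γ, ∃ y, x = Sum.inl y) with hall | hall
  · right
    refine ⟨?_, hall⟩
    rw [List.map_map]
    conv_lhs => rw [← List.map_id γ]
    apply List.map_congr_left
    rintro x hx
    obtain ⟨y, rfl⟩ := hall x hx
    rfl
  · left
    push_neg at hall
    obtain ⟨x, hx, hni⟩ := hall
    rcases x with y | f
    · exact absurd rfl (hni y)
    · exact ⟨_, hx, f, rfl⟩

end DPG

open DPG

/-- **The triangulation only increases extremal width** (Lemma 3.7).
Let `(𝒢, ∂P)` be a simple polygonal subdivision graph and `𝒢̃` its triangulation.  For any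
two non-adjacent vertices `a, b` on `∂P`,
`EW_{𝒢̃}(Γ̃_{a,b}, ∂P) ≥ EW_𝒢(Γ_{a,b}, ∂P)` and `EW_{𝒢̃}(Γ̃*_{a,b}, ∂P) ≥ EW_𝒢(Γ*_{a,b}, ∂P)`. -/
theorem EW_le_EW_triangulation
    (V : Type) [Fintype V] (S : DPG.PolygonalSubdivision V)
    (a b : V) (ha : a ∈ S.bdryVerts) (hb : b ∈ S.bdryVerts)
    (hab : a ≠ b) (hnadj : ¬ S.G.Adj a b) :
    EW (S.connFam a b) S.bdryVerts ≤ EW (tildeConnFam S a b) (tildeBdry S) ∧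
    EW (S.sepFam a b) S.bdryVerts ≤ EW (tildeSepFam S a b) (tildeBdry S) := by
  classical
  constructor
  · apply EW_le_aux
    · rintro γ ⟨hp, hh, hl⟩
      exact ⟨(proper_map_iff γ).2 hp, by rw [List.head?_map, hh]; rfl,
        by rw [List.getLast?_map, hl]; rfl⟩
    · intro γ hγ
      rcases h2_dichotomy γ a with h | ⟨heq, -⟩
      · exact Or.inl h
      · right
        obtain ⟨hp, hh, hl⟩ := hγ
        refine ⟨γ.map (Sum.elim id fun _ => a), ⟨?_, ?_, ?_⟩, heq⟩
        · rw [heq] at hp; exact (proper_map_iff _).1 hp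
        · rw [List.head?_map, hh]; rfl
        · rw [List.getLast?_map, hl]; rfl
  · apply EW_le_aux
    · rintro γ ⟨hp, u, v, hh, hl, hsep⟩
      exact ⟨(proper_map_iff γ).2 hp, Sum.inl u, Sum.inl v,
        by rw [List.head?_map, hh]; rfl, by rw [List.getLast?_map, hl]; rfl,
        u, v, rfl, rfl, hsep⟩
    · intro γ hγ
      rcases h2_dichotomy γ a with h | ⟨heq, -⟩
      · exact Or.inl h
      · right
        obtain ⟨hp, u, v, hh, hl, u', v', rfl, rfl, hsep⟩ := hγ
        refine ⟨γ.map (Sum.elim id fun _ => a), ⟨?_, u', v', ?_, ?_, hsep⟩, heq⟩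
        · rw [heq] at hp; exact (proper_map_iff _).1 hp
        · rw [List.head?_map, hh]; rfl
        · rw [List.getLast?_map, hl]; rfl
end
end

section
/- Let (𝒢, ∂P) be a simple polygonal subdivision graph, 𝒢_r the graph obtained by successively adding a vertex w_{v,F} for each vertex v of 𝒢 and each non-triangular face F of the subdivision adjacent to v (joined to v and to the two neighbours of v on ∂F), and 𝒢̃ the triangulation obtained from 𝒢 by adding one vertex w_F per non-triangular face F joined to all vertices of ∂F. Let q: 𝒢_r → 𝒢̃ be the natural quotient map that is the identity on vertices of 𝒢 and collapses, for each non-triangular face F, all vertices w_{v,F} to the single vertex w_F. Then for every connected subgraph X of 𝒢̃, the preimage q⁻¹(X) is a connected subgraph of 𝒢_r. -/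
open Set

noncomputable section

namespace DPG

open PolygonalSubdivision

variable {V : Type*} [Fintype V]

/-- Index type for the vertices `w_{v,F}` added in the staged subdivision: pairs of a
vertex index `i` (the vertex `v = vord i`) and a non-triangular face `F` adjacent to `v`. -/
abbrev WIdx (S : PolygonalSubdivision V) (vord : Fin (Fintype.card V) ≃ V) : Type _ :=
  {p : Fin (Fintype.card V) × Fin S.nf // 4 ≤ S.fm p.2 ∧ vord p.1 ∈ S.faceVerts p.2}

/-- `u` is immediately followed by `v` on the boundary cycle of the face `j`. -/
def ConsecOn (S : PolygonalSubdivision V) (j : Fin S.nf) (u v : V) : Prop :=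
  ∃ i : ZMod (S.fm j), S.fbd j i = u ∧ S.fbd j (i + 1) = v

/-- The underlying relation of the staged graph `𝒢_k`.  A vertex `w_{v_i, F}` is present
once `i < k`; it is joined to `v_i`, to the (unprocessed) neighbours of `v_i` on `∂F` with
larger label, and to the vertices `w_{v_j, F}` for `v_j` a neighbour of `v_i` on `∂F`. -/
def stageRel (S : PolygonalSubdivision V) (vord : Fin (Fintype.card V) ≃ V) (k : ℕ) :
    V ⊕ WIdx S vord → V ⊕ WIdx S vord → Prop
  | Sum.inl u, Sum.inl v => S.G.Adj u v
  | Sum.inl _, Sum.inr _ => False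
  | Sum.inr p, Sum.inl u => (p.1.1 : ℕ) < k ∧
      (u = vord p.1.1 ∨
        ((ConsecOn S p.1.2 (vord p.1.1) u ∨ ConsecOn S p.1.2 u (vord p.1.1)) ∧
          p.1.1 < vord.symm u))
  | Sum.inr p, Sum.inr q => (p.1.1 : ℕ) < k ∧ (q.1.1 : ℕ) < k ∧ p.1.2 = q.1.2 ∧
      (ConsecOn S p.1.2 (vord p.1.1) (vord q.1.1) ∨ ConsecOn S p.1.2 (vord q.1.1) (vord p.1.1))

/-- The staged graph `𝒢_k` (with `𝒢_0 = 𝒢`), obtained from `𝒢_{k-1}` by adding, in each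
non-triangular face `F` adjacent to `v_k`, a new vertex `w_{v_k,F}` joined to `v_k` and to
the two neighbours of `v_k` on the boundary of the current face `F`. -/
def stageGraph (S : PolygonalSubdivision V) (vord : Fin (Fintype.card V) ≃ V) (k : ℕ) :
    SimpleGraph (V ⊕ WIdx S vord) :=
  SimpleGraph.fromRel (stageRel S vord k)

/-- The vertex set `𝒱_k` of `𝒢_k`. -/
def activeSet (S : PolygonalSubdivision V) (vord : Fin (Fintype.card V) ≃ V) (k : ℕ) :
    Set (V ⊕ WIdx S vord) :=
  {x | ∀ p, x = Sum.inr p → (p.1.1 : ℕ) < k}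

end DPG

namespace DPG

variable {V : Type*} [Fintype V]

/-- The natural quotient map `q : 𝒢_r → 𝒢̃`, which is the identity on the vertices of `𝒢`
and collapses each vertex `w_{v,F}` to the vertex `w_F` of the triangulation. -/
def qmap (S : PolygonalSubdivision V) (vord : Fin (Fintype.card V) ≃ V) :
    V ⊕ WIdx S vord → V ⊕ NTFace S :=
  Sum.map id (fun p => ⟨p.1.2, p.2.1⟩)

/-- The subgraph of `G` induced on a set `s` of vertices. -/
def inducedSub {T : Type*} (G : SimpleGraph T) (s : Set T) : G.Subgraph where
  verts := s
  Adj x y := x ∈ s ∧ y ∈ s ∧ G.Adj x y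
  adj_sub h := h.2.2
  edge_vert h := h.1
  symm := ⟨fun x y h => ⟨h.2.1, h.1, h.2.2.symm⟩⟩

end DPG

namespace DPG

open PolygonalSubdivision

variable {V : Type*} [Fintype V]
variable (S : PolygonalSubdivision V) (vord : Fin (Fintype.card V) ≃ V)

/-- The vertex `w_{fbd j i, F_j}` of the staged graph. -/
def wv (j : Fin S.nf) (hj : 4 ≤ S.fm j) (i : ZMod (S.fm j)) : V ⊕ WIdx S vord :=
  Sum.inr ⟨(vord.symm (S.fbd j i), j), hj, by
    simpa [PolygonalSubdivision.faceVerts] using ⟨i, rfl⟩⟩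

@[simp] lemma qmap_wv (j : Fin S.nf) (hj : 4 ≤ S.fm j) (i : ZMod (S.fm j)) :
    qmap S vord (wv S vord j hj i) = Sum.inr ⟨j, hj⟩ := rfl

lemma wv_adj_succ (j : Fin S.nf) (hj : 4 ≤ S.fm j) (i : ZMod (S.fm j)) :
    (stageGraph S vord (Fintype.card V)).Adj (wv S vord j hj i) (wv S vord j hj (i + 1)) := by
  haveI : Fact (1 < S.fm j) := ⟨by omega⟩
  have hne : S.fbd j i ≠ S.fbd j (i + 1) := fun h =>
    (left_ne_add.mpr (one_ne_zero : (1 : ZMod (S.fm j)) ≠ 0)) (S.fbd_inj j h)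
  rw [stageGraph, SimpleGraph.fromRel_adj]
  refine ⟨?_, Or.inl ?_⟩
  · simp only [wv, ne_eq, Sum.inr.injEq, Subtype.mk.injEq, Prod.mk.injEq]
    intro h
    exact hne (vord.symm.injective h.1)
  · exact ⟨(⟨(vord.symm (S.fbd j i), j), _⟩ : WIdx S vord).1.1.isLt,
      (⟨(vord.symm (S.fbd j (i+1)), j), _⟩ : WIdx S vord).1.1.isLt, rfl,
      Or.inl ⟨i, by simp [wv], by simp [wv]⟩⟩

lemma wv_adj_base (j : Fin S.nf) (hj : 4 ≤ S.fm j) (i : ZMod (S.fm j)) :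
    (stageGraph S vord (Fintype.card V)).Adj (wv S vord j hj i) (Sum.inl (S.fbd j i)) := by
  rw [stageGraph, SimpleGraph.fromRel_adj]
  refine ⟨by simp [wv], Or.inl ?_⟩
  exact ⟨(⟨(vord.symm (S.fbd j i), j), hj, by
      simpa [PolygonalSubdivision.faceVerts] using ⟨i, rfl⟩⟩ : WIdx S vord).1.1.isLt,
    Or.inl (by simp [wv])⟩

lemma inl_adj {u v : V} (h : S.G.Adj u v) :
    (stageGraph S vord (Fintype.card V)).Adj (Sum.inl u) (Sum.inl v) := by
  rw [stageGraph, SimpleGraph.fromRel_adj]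
  exact ⟨by simpa using h.ne, Or.inl h⟩

/-- Any element of the fiber over `w_F` is some `wv`. -/
lemma fiber_eq_wv {j : Fin S.nf} {hj : 4 ≤ S.fm j} {x : V ⊕ WIdx S vord}
    (hx : qmap S vord x = Sum.inr ⟨j, hj⟩) :
    ∃ i : ZMod (S.fm j), x = wv S vord j hj i := by
  cases x with
  | inl u => simp [qmap] at hx
  | inr p =>
    have hx' : (Sum.inr ⟨p.1.2, p.2.1⟩ : V ⊕ NTFace S) = Sum.inr ⟨j, hj⟩ := hx
    have hj2 : p.1.2 = j := by
      have h2 := Sum.inr_injective hx'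
      exact Subtype.ext_iff.mp h2
    obtain ⟨i, hi⟩ : vord p.1.1 ∈ range (S.fbd j) := by
      have := p.2.2
      rw [PolygonalSubdivision.faceVerts, hj2] at this
      exact this
    refine ⟨i, ?_⟩
    have h1 : p.1.1 = vord.symm (S.fbd j i) := by
      rw [hi, Equiv.symm_apply_apply]
    simp only [wv]
    congr 1
    exact Subtype.ext (Prod.ext h1 hj2)

lemma fiber_eq_inl {u : V} {x : V ⊕ WIdx S vord}
    (hx : qmap S vord x = Sum.inl u) : x = Sum.inl u := by
  cases x with
  | inl v => simpa [qmap] using hx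
  | inr p => simp [qmap] at hx

end DPG

open DPG

/-- **Connectedness of preimages under the collapsing map** (Lemma 3.8).
Let `q : 𝒢_r → 𝒢̃` be the natural quotient map collapsing the vertices `w_{v,F}` to `w_F`.
Then for every connected subgraph `X` of `𝒢̃`, the preimage `q⁻¹(X)` (the subgraph of
`𝒢_r` induced on the union of the fibers of the vertices of `X`) is a connected subgraph
of `𝒢_r`. -/
theorem preimage_connected_subgraph
    (V : Type) [Fintype V] (S : DPG.PolygonalSubdivision V)
    (vord : Fin (Fintype.card V) ≃ V)
    (X : (tildeGraph S).Subgraph) (hX : X.Connected) :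
    (inducedSub (stageGraph S vord (Fintype.card V))
      (qmap S vord ⁻¹' X.verts)).Connected := by
  classical
  set Y := inducedSub (stageGraph S vord (Fintype.card V)) (qmap S vord ⁻¹' X.verts) with hYdef
  have hmem : ∀ x : V ⊕ WIdx S vord, qmap S vord x ∈ X.verts → x ∈ Y.verts := fun _ h => h
  have hadj : ∀ {x y : V ⊕ WIdx S vord}, qmap S vord x ∈ X.verts → qmap S vord y ∈ X.verts →
      (stageGraph S vord (Fintype.card V)).Adj x y → Y.Adj x y := fun hx hy h => ⟨hx, hy, h⟩
  -- reachability along the face cycle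
  have hfiber_add : ∀ (j : Fin S.nf) (hj : 4 ≤ S.fm j)
      (hjX : (Sum.inr ⟨j, hj⟩ : V ⊕ NTFace S) ∈ X.verts) (i : ZMod (S.fm j)) (k : ℕ),
      Y.coe.Reachable ⟨wv S vord j hj i, hmem _ (by simp [hjX])⟩
        ⟨wv S vord j hj (i + (k : ZMod (S.fm j))), hmem _ (by simp [hjX])⟩ := by
    intro j hj hjX i k
    induction k with
    | zero =>
      have h0 : i + ((0 : ℕ) : ZMod (S.fm j)) = i := by push_cast; ring
      rw [h0]
    | succ k ih =>
      have hstep : Y.coe.Adj ⟨wv S vord j hj (i + (k : ZMod (S.fm j))), hmem _ (by simp [hjX])⟩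
          ⟨wv S vord j hj (i + (k : ZMod (S.fm j)) + 1), hmem _ (by simp [hjX])⟩ :=
        hadj (by simp [hjX]) (by simp [hjX]) (wv_adj_succ S vord j hj _)
      have hcast : i + ((k + 1 : ℕ) : ZMod (S.fm j)) = i + (k : ZMod (S.fm j)) + 1 := by
        push_cast; ring
      rw [hcast]
      exact ih.trans hstep.reachable
  -- connectivity of fibers
  have hfiber : ∀ {a : V ⊕ NTFace S} (ha : a ∈ X.verts) {x y : V ⊕ WIdx S vord}
      (hx : qmap S vord x = a) (hy : qmap S vord y = a),
      Y.coe.Reachable ⟨x, hmem x (hx ▸ ha)⟩ ⟨y, hmem y (hy ▸ ha)⟩ := by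
    intro a ha x y hx hy
    cases a with
    | inl u =>
      obtain rfl := fiber_eq_inl S vord hx
      obtain rfl := fiber_eq_inl S vord hy
      exact SimpleGraph.Reachable.refl _
    | inr f =>
      obtain ⟨j, hj⟩ := f
      obtain ⟨i, rfl⟩ := fiber_eq_wv S vord hx
      obtain ⟨i', rfl⟩ := fiber_eq_wv S vord hy
      haveI : NeZero (S.fm j) := ⟨by omega⟩
      have key : i + (((i' - i).val : ℕ) : ZMod (S.fm j)) = i' := by
        rw [ZMod.natCast_rightInverse (i' - i)]; ring
      simpa [key] using hfiber_add j hj ha i ((i' - i).val)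
  -- lifting edges of X
  have hlift : ∀ {a b : V ⊕ NTFace S}, X.Adj a b →
      ∃ x y, qmap S vord x = a ∧ qmap S vord y = b ∧
        (stageGraph S vord (Fintype.card V)).Adj x y := by
    intro a b hab
    have h := hab.adj_sub
    rw [tildeGraph, SimpleGraph.fromRel_adj] at h
    obtain ⟨hne, h⟩ := h
    cases a with
    | inl u =>
      cases b with
      | inl v =>
        have huv : S.G.Adj u v := by
          rcases h with h | h
          · exact h
          · exact (h : S.G.Adj v u).symm
        exact ⟨Sum.inl u, Sum.inl v, rfl, rfl, inl_adj S vord huv⟩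
      | inr f =>
        obtain ⟨j, hj⟩ := f
        have hu : u ∈ S.faceVerts j := by rcases h with h | h <;> exact h
        obtain ⟨i, hi⟩ := hu
        exact ⟨Sum.inl u, wv S vord j hj i, rfl, rfl, by
          rw [← hi]; exact (wv_adj_base S vord j hj i).symm⟩
    | inr f =>
      cases b with
      | inl u =>
        obtain ⟨j, hj⟩ := f
        have hu : u ∈ S.faceVerts j := by rcases h with h | h <;> exact h
        obtain ⟨i, hi⟩ := hu
        exact ⟨wv S vord j hj i, Sum.inl u, rfl, rfl, by
          rw [← hi]; exact wv_adj_base S vord j hj i⟩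
      | inr g => rcases h with h | h <;> exact (h : False).elim
  -- lifting walks of X
  have hmain : ∀ {a b : X.verts} (_ : X.coe.Walk a b)
      {x y : V ⊕ WIdx S vord} (hx : qmap S vord x = a.1) (hy : qmap S vord y = b.1),
      Y.coe.Reachable ⟨x, hmem x (hx ▸ a.2)⟩ ⟨y, hmem y (hy ▸ b.2)⟩ := by
    intro a b w
    induction w with
    | @nil a => intro x y hx hy; exact hfiber a.2 hx hy
    | @cons a c b h w ih =>
      intro x y hx hy
      have hac : X.Adj a.1 c.1 := h
      obtain ⟨x', y', hx', hy', hxy⟩ := hlift hac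
      have hx'm : qmap S vord x' ∈ X.verts := hx' ▸ a.2
      have hy'm : qmap S vord y' ∈ X.verts := hy' ▸ c.2
      have hstep : Y.coe.Adj ⟨x', hmem x' hx'm⟩ ⟨y', hmem y' hy'm⟩ :=
        hadj hx'm hy'm hxy
      exact ((hfiber a.2 hx hx').trans hstep.reachable).trans (ih hy' hy)
  rw [SimpleGraph.Subgraph.connected_iff]
  constructor
  · rw [SimpleGraph.Subgraph.preconnected_iff]
    rintro ⟨x, hx⟩ ⟨y, hy⟩
    obtain ⟨w⟩ := hX.preconnected.coe ⟨qmap S vord x, hx⟩ ⟨qmap S vord y, hy⟩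
    exact hmain w rfl rfl
  · obtain ⟨a, ha⟩ := hX.nonempty
    cases a with
    | inl u => exact ⟨Sum.inl u, ha⟩
    | inr f =>
      obtain ⟨j, hj⟩ := f
      exact ⟨wv S vord j hj 0, hmem _ (by simpa using ha)⟩
end
end

section
/- There exists a constant A₁ > 0 such that for all θ ∈ [0, 2π], (θ − sin θ)/2 ≥ A₁ (1 − cos(θ/2))². -/
open Real

/-- On `[0, π]` we have `θ - sin θ ≥ 2/(3π²) θ³`. -/
lemma aux_sub_sin_lower (θ : ℝ) (h0 : 0 ≤ θ) (h1 : θ ≤ Real.pi) :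
    2 / (3 * Real.pi ^ 2) * θ ^ 3 ≤ θ - Real.sin θ := by
  set f : ℝ → ℝ := fun x => x - Real.sin x - 2 / (3 * Real.pi ^ 2) * x ^ 3 with hf
  have hderiv : ∀ x : ℝ, HasDerivAt f
      (1 - Real.cos x - 2 / (3 * Real.pi ^ 2) * (3 * x ^ 2)) x := by
    intro x
    have h1' : HasDerivAt (fun x : ℝ => x - Real.sin x) (1 - Real.cos x) x :=
      (hasDerivAt_id x).sub (Real.hasDerivAt_sin x)
    have h2' : HasDerivAt (fun x : ℝ => 2 / (3 * Real.pi ^ 2) * x ^ 3)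
        (2 / (3 * Real.pi ^ 2) * (3 * x ^ 2)) x := by
      simpa using (hasDerivAt_pow 3 x).const_mul (2 / (3 * Real.pi ^ 2))
    exact h1'.sub h2'
  have hmono : MonotoneOn f (Set.Icc 0 Real.pi) := by
    apply monotoneOn_of_deriv_nonneg (convex_Icc 0 Real.pi)
    · exact Continuous.continuousOn (by continuity)
    · intro x _
      exact ((hderiv x).differentiableAt).differentiableWithinAt
    · intro x hx
      rw [interior_Icc] at hx
      rw [(hderiv x).deriv]
      have hcos : Real.cos x ≤ 1 - 2 / Real.pi ^ 2 * x ^ 2 := by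
        apply Real.cos_le_one_sub_mul_cos_sq
        rw [abs_le]
        constructor <;> nlinarith [hx.1, hx.2, Real.pi_pos]
      have hπ : (0:ℝ) < Real.pi ^ 2 := by positivity
      have : 2 / (3 * Real.pi ^ 2) * (3 * x ^ 2) = 2 / Real.pi ^ 2 * x ^ 2 := by
        field_simp
      rw [this]; linarith
  have h := hmono (Set.mem_Icc.2 ⟨le_refl 0, Real.pi_pos.le⟩) (Set.mem_Icc.2 ⟨h0, h1⟩) h0
  simp only [hf, Real.sin_zero] at h
  nlinarith [h]

/-- **Area of a circular segment versus projection length** (used in Lemma 4.7).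
There is a constant `A₁ > 0` such that for all `θ ∈ [0, 2π]`,
`(θ − sin θ)/2 ≥ A₁ (1 − cos(θ/2))²`. -/
theorem circular_segment_area_lower_bound :
    ∃ A₁ : ℝ, 0 < A₁ ∧ ∀ θ ∈ Set.Icc (0 : ℝ) (2 * Real.pi),
      A₁ * (1 - Real.cos (θ / 2)) ^ 2 ≤ (θ - Real.sin θ) / 2 := by
  refine ⟨1/8, by norm_num, ?_⟩
  intro θ hθ
  obtain ⟨h0, h2π⟩ := hθ
  have hπ := Real.pi_pos
  rcases le_or_gt θ Real.pi with hθπ | hθπ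
  · -- small case: use the cubic lower bound
    have key := aux_sub_sin_lower θ h0 hθπ
    -- bound (1 - cos (θ/2))² ≤ θ⁴/64
    have hhalf : θ / 2 = 2 * (θ / 4) := by ring
    have hc : Real.cos (θ / 2) = 1 - 2 * Real.sin (θ / 4) ^ 2 := by
      rw [hhalf, Real.cos_two_mul]
      nlinarith [Real.sin_sq_add_cos_sq (θ / 4)]
    have hs0 : 0 ≤ Real.sin (θ / 4) :=
      Real.sin_nonneg_of_nonneg_of_le_pi (by linarith) (by linarith)
    have hs1 : Real.sin (θ / 4) ≤ θ / 4 := Real.sin_le (by linarith)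
    have hbound : (1 - Real.cos (θ / 2)) ^ 2 ≤ θ ^ 4 / 64 := by
      rw [hc]
      nlinarith [pow_le_pow_left₀ hs0 hs1 4, pow_nonneg hs0 4]
    have hπ4 : Real.pi ≤ 4 := Real.pi_le_four
    have hπ2 : Real.pi ^ 2 ≤ 16 := by nlinarith
    have hθ3 : 0 ≤ θ ^ 3 := by positivity
    have hco : (1:ℝ)/24 ≤ 2 / (3 * Real.pi ^ 2) := by
      rw [div_le_div_iff₀ (by norm_num) (by positivity)]
      nlinarith
    have h1 : θ ^ 3 / 24 ≤ 2 / (3 * Real.pi ^ 2) * θ ^ 3 := by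
      nlinarith [mul_le_mul_of_nonneg_right hco hθ3]
    have h2 : θ ^ 4 ≤ 4 * θ ^ 3 := by nlinarith
    nlinarith
  · -- large case: θ ≥ π, so θ - sin θ ≥ π - 1 ≥ 2, while LHS ≤ 1/2
    have hsin : Real.sin θ ≤ 1 := Real.sin_le_one θ
    have hcos1 : Real.cos (θ / 2) ≤ 1 := Real.cos_le_one _
    have hcos2 : -1 ≤ Real.cos (θ / 2) := Real.neg_one_le_cos _
    have hπ3 : Real.pi > 3 := Real.pi_gt_three
    nlinarith [sq_nonneg (1 - Real.cos (θ / 2))]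
end

section
/- There exists a threshold R₀ such that for all R ≥ R₀, every admissible disk D in the annulus 𝒜_R = B(0, R+1) − closure(B(0,R)) that is a Euclidean disk in ℂ has Euclidean diameter at most 5. -/
open Set MeasureTheory

noncomputable section

namespace DPG

/-! ### Conformal extremal width -/

/-- The circular rectangle `{r e^{iθ} : r ∈ (R, R+1), θ ∈ (θ₁, θ₂)}` in the annulus
`𝒜_R`. -/
def circRect (R θ₁ θ₂ : ℝ) : Set ℂ :=
  {z | ∃ r θ : ℝ, R < r ∧ r < R + 1 ∧ θ₁ < θ ∧ θ < θ₂ ∧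
    z = r * Complex.exp (θ * Complex.I)}

/-- The circular arc `{ρ e^{iθ} : θ ∈ [θ₁, θ₂]}`. -/
def circArc (ρ θ₁ θ₂ : ℝ) : Set ℂ :=
  {z | ∃ θ : ℝ, θ₁ ≤ θ ∧ θ ≤ θ₂ ∧ z = ρ * Complex.exp (θ * Complex.I)}

/-- The round annulus `𝒜_R = B(0, R+1) − closure (B(0, R))`. -/
def annulusA (R : ℝ) : Set ℂ := Metric.ball 0 (R + 1) \ Metric.closedBall 0 R

/-- The family of curves in `Ω` joining `A` to `B`: continuous curves on `[0,1]`,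
(piecewise) differentiable in the interior, with interior inside `Ω` and endpoints on `A`
and `B`. -/
def joiningCurves (Ω A B : Set ℂ) : Set (ℝ → ℂ) :=
  {α | ContinuousOn α (Icc 0 1) ∧ DifferentiableOn ℝ α (Ioo 0 1) ∧
    α '' Ioo 0 1 ⊆ Ω ∧ ((α 0 ∈ A ∧ α 1 ∈ B) ∨ (α 0 ∈ B ∧ α 1 ∈ A))}

/-- The length `∫_α ρ |dz|` of a curve with respect to a conformal metric `ρ`. -/
def curveLen (ρ : ℂ → ℝ) (α : ℝ → ℂ) : ℝ :=
  ∫ t in (0 : ℝ)..1, ρ (α t) * ‖deriv α t‖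

/-- A Borel conformal metric `ρ` is admissible for a curve family `Γ` if it is
nonnegative and gives every curve of `Γ` length at least `1`. -/
def ConfAdmissible (ρ : ℂ → ℝ) (Γ : Set (ℝ → ℂ)) : Prop :=
  Measurable ρ ∧ (∀ z, 0 ≤ ρ z) ∧ ∀ α ∈ Γ, 1 ≤ curveLen ρ α

/-- The conformal extremal width (modulus) of a curve family `Γ` in a domain `Ω`:
the infimum of `∫_Ω ρ²` over admissible metrics.  It is the reciprocal of the conformal
extremal length `EL(Γ) = sup_ρ inf_α l_ρ(α)²/area_ρ(Ω)`. -/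
def confEW (Ω : Set ℂ) (Γ : Set (ℝ → ℂ)) : ℝ :=
  sInf {A | ∃ ρ, ConfAdmissible ρ Γ ∧ A = ∫ z in Ω, ρ z ^ 2}

/-- The extremal width of a circular rectangle: the extremal width of the family of
curves joining its two horizontal boundary arcs. -/
def rectEW (R θ₁ θ₂ : ℝ) : ℝ :=
  confEW (circRect R θ₁ θ₂)
    (joiningCurves (circRect R θ₁ θ₂) (circArc R θ₁ θ₂) (circArc (R + 1) θ₁ θ₂))

/-- The extremal width of the annulus `𝒜_R`: the extremal width of the family of curves
joining its two boundary circles. -/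
def annulusEW (R : ℝ) : ℝ :=
  confEW (annulusA R)
    (joiningCurves (annulusA R) (Metric.sphere 0 R) (Metric.sphere 0 (R + 1)))

end DPG

namespace DPG

/-- The set of admissible intersection angles arising from Coxeter weights:
`{π/n : n ∈ ℕ, n ≥ 2} ∪ {0}`. -/
def coxeterAngles : Set ℝ := {ω | ω = 0 ∨ ∃ n : ℕ, 2 ≤ n ∧ ω = Real.pi / n}

/-- The disk `closedBall z₀ r` meets the inner complementary disk
`D₁ = closure (B(0,R))` of the annulus `𝒜_R`. -/
def MeetsInner (R : ℝ) (z₀ : ℂ) (r : ℝ) : Prop :=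
  (Metric.closedBall z₀ r ∩ Metric.closedBall (0 : ℂ) R).Nonempty

/-- The disk `closedBall z₀ r` meets the outer complementary disk
`D₂ = (B(0,R+1))ᶜ` of the annulus `𝒜_R`. -/
def MeetsOuter (R : ℝ) (z₀ : ℂ) (r : ℝ) : Prop :=
  (Metric.closedBall z₀ r ∩ (Metric.ball (0 : ℂ) (R + 1))ᶜ).Nonempty

/-- An admissible disk `D = closedBall z₀ r` in the annulus `𝒜_R`: it meets `𝒜_R`; for
each of the two complementary disks `D₁, D₂` of `𝒜_R`, it is either disjoint from it or
meets it at an angle `ωᵢ ∈ {π/n : n ≥ 2} ∪ {0}` (expressed by the standard algebraic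
relation between the center, the radii and the angle); and when it meets both,
`ω₁ + ω₂ < π`. -/
def IsAdmissibleDisk (R : ℝ) (z₀ : ℂ) (r : ℝ) : Prop :=
  0 < r ∧ (Metric.closedBall z₀ r ∩ annulusA R).Nonempty ∧
  ∃ ω₁ ∈ coxeterAngles, ∃ ω₂ ∈ coxeterAngles,
    (MeetsInner R z₀ r → ‖z₀‖ ^ 2 = R ^ 2 + r ^ 2 + 2 * R * r * Real.cos ω₁) ∧
    (MeetsOuter R z₀ r →
      ‖z₀‖ ^ 2 = (R + 1) ^ 2 + r ^ 2 - 2 * (R + 1) * r * Real.cos ω₂) ∧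
    (MeetsInner R z₀ r → MeetsOuter R z₀ r → ω₁ + ω₂ < Real.pi)

end DPG

open DPG

lemma cox_bounds {ω : ℝ} (h : ω ∈ coxeterAngles) : 0 ≤ ω ∧ ω ≤ Real.pi / 2 := by
  obtain h0 | ⟨n, hn, rfl⟩ := h
  · subst h0
    exact ⟨le_refl 0, by positivity⟩
  · have hn2 : (2 : ℝ) ≤ (n : ℝ) := by exact_mod_cast hn
    constructor
    · positivity
    · exact div_le_div_of_nonneg_left Real.pi_pos.le two_pos hn2

lemma cox_cos_nonneg {ω : ℝ} (h : ω ∈ coxeterAngles) : 0 ≤ Real.cos ω := by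
  obtain ⟨h0, h1⟩ := cox_bounds h
  exact Real.cos_nonneg_of_mem_Icc ⟨by linarith, h1⟩

lemma cox_cos_half {ω : ℝ} (h : ω ∈ coxeterAngles) (hlt : ω < Real.pi / 2) :
    1 / 2 ≤ Real.cos ω := by
  obtain h0 | ⟨n, hn, rfl⟩ := h
  · subst h0; simp [Real.cos_zero]; norm_num
  · have hn3 : 3 ≤ n := by
      by_contra hc
      push_neg at hc
      interval_cases n
      · exact absurd hlt (by norm_num)
    have hn3' : (3 : ℝ) ≤ (n : ℝ) := by exact_mod_cast hn3
    have h1 : Real.pi / n ≤ Real.pi / 3 :=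
      div_le_div_of_nonneg_left Real.pi_pos.le (by norm_num) hn3'
    have h2 : Real.pi / 3 ≤ Real.pi := by linarith [Real.pi_pos]
    have := Real.cos_le_cos_of_nonneg_of_le_pi (by positivity) h2 h1
    rwa [Real.cos_pi_div_three] at this

lemma not_inner_lt {R r : ℝ} {z₀ : ℂ} (hR : 0 ≤ R) (hr : 0 ≤ r)
    (h : ¬ MeetsInner R z₀ r) : R + r < ‖z₀‖ := by
  by_contra hle
  push_neg at hle
  apply h
  by_cases hz : ‖z₀‖ ≤ R
  · exact ⟨z₀, Metric.mem_closedBall_self hr, by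
      simp only [Metric.mem_closedBall, Complex.dist_eq, sub_zero]; exact hz⟩
  · push_neg at hz
    set a := ‖z₀‖ with ha
    have ha0 : 0 < a := lt_of_le_of_lt hR hz
    refine ⟨(R / a : ℝ) • z₀, ?_, ?_⟩
    · have key : (R / a : ℝ) • z₀ - z₀ = ((R / a - 1 : ℝ)) • z₀ := by
        rw [sub_smul, one_smul]
      have h1 : R / a ≤ 1 := by
        rw [div_le_one ha0]; exact hz.le
      rw [Metric.mem_closedBall, dist_eq_norm, key, norm_smul, Real.norm_eq_abs,
        ← ha, abs_of_nonpos (by linarith)]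
      have h2 : -(R / a - 1) * a = a - R := by field_simp; ring
      rw [h2]
      linarith
    · simp only [Metric.mem_closedBall, dist_zero_right, norm_smul,
        Real.norm_eq_abs, ← ha]
      rw [abs_of_nonneg (by positivity)]
      have : R / a * a = R := by field_simp
      rw [this]

lemma not_outer_lt {R r : ℝ} {z₀ : ℂ} (hr : 0 ≤ r)
    (h : ¬ MeetsOuter R z₀ r) : ‖z₀‖ + r < R + 1 := by
  have hsub : Metric.closedBall z₀ r ⊆ Metric.ball (0 : ℂ) (R + 1) := by
    intro p hp
    by_contra hc
    exact h ⟨p, hp, hc⟩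
  by_cases hz : z₀ = 0
  · subst hz
    have hp : (r : ℂ) ∈ Metric.closedBall (0 : ℂ) r := by
      simp only [Metric.mem_closedBall, dist_zero_right, Complex.norm_real,
        Real.norm_eq_abs, abs_of_nonneg hr]
      exact le_refl r
    have := hsub hp
    simp only [Metric.mem_ball, dist_zero_right, Complex.norm_real,
      Real.norm_eq_abs, abs_of_nonneg hr] at this
    simp only [norm_zero]
    linarith
  · set a := ‖z₀‖ with ha
    have ha0 : 0 < a := by
      simpa [ha] using (norm_pos_iff.mpr hz)
    have hp : ((1 + r / a : ℝ)) • z₀ ∈ Metric.closedBall z₀ r := by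
      have key : ((1 + r / a : ℝ)) • z₀ - z₀ = ((r / a : ℝ)) • z₀ := by
        rw [add_smul, one_smul]; ring
      simp only [Metric.mem_closedBall, dist_eq_norm, key, norm_smul,
        Real.norm_eq_abs, ← ha]
      rw [abs_of_nonneg (by positivity)]
      have : r / a * a = r := by field_simp
      rw [this]
    have := hsub hp
    simp only [Metric.mem_ball, dist_zero_right, norm_smul, Real.norm_eq_abs,
      ← ha] at this
    rw [abs_of_nonneg (by positivity)] at this
    have heq : (1 + r / a) * a = a + r := by field_simp
    rw [heq] at this
    exact this

/-- **Uniform diameter bound for admissible disks** (Lemma 4.6).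
There is a threshold `R₀` such that for all `R ≥ R₀`, every admissible disk in the
annulus `𝒜_R = B(0, R+1) − closure(B(0,R))` which is a Euclidean disk in `ℂ` has
Euclidean diameter at most `5`. -/
theorem admissible_disk_diam_le_five :
    ∃ R₀ : ℝ, ∀ R : ℝ, R₀ ≤ R → ∀ (z₀ : ℂ) (r : ℝ), IsAdmissibleDisk R z₀ r →
      Metric.diam (Metric.closedBall z₀ r) ≤ 5 := by
  refine ⟨2, fun R hR z₀ r hD => ?_⟩
  obtain ⟨hr, -, ω₁, hω₁, ω₂, hω₂, h1, h2, h12⟩ := hD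
  have hRpos : (0:ℝ) < R := by linarith
  have ha0 : 0 ≤ ‖z₀‖ := norm_nonneg z₀
  set a := ‖z₀‖ with ha
  have hr5 : r ≤ 5 / 2 := by
    by_cases hin : MeetsInner R z₀ r <;> by_cases hout : MeetsOuter R z₀ r
    · -- meets both
      have e1 := h1 hin
      have e2 := h2 hout
      have hπ := h12 hin hout
      obtain ⟨hω₁0, hω₁2⟩ := cox_bounds hω₁
      obtain ⟨hω₂0, hω₂2⟩ := cox_bounds hω₂
      have c1 := cox_cos_nonneg hω₁
      have c2 := cox_cos_nonneg hω₂
      rcases lt_or_ge ω₁ (Real.pi / 2) with hlt | hge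
      · have hc1 := cox_cos_half hω₁ hlt
        nlinarith [mul_nonneg (mul_nonneg hRpos.le hr.le) (by linarith : (0:ℝ) ≤ Real.cos ω₁ - 1/2),
          mul_nonneg (mul_nonneg (by linarith : (0:ℝ) ≤ R + 1) hr.le) c2,
          mul_nonneg (by linarith : (0:ℝ) ≤ R - 2) hr.le]
      · have hω₂lt : ω₂ < Real.pi / 2 := by linarith
        have hc2 := cox_cos_half hω₂ hω₂lt
        nlinarith [mul_nonneg (mul_nonneg hRpos.le hr.le) c1,
          mul_nonneg (mul_nonneg (by linarith : (0:ℝ) ≤ R + 1) hr.le)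
            (by linarith : (0:ℝ) ≤ Real.cos ω₂ - 1/2),
          mul_nonneg (by linarith : (0:ℝ) ≤ R - 2) hr.le]
    · -- meets inner only
      have e1 := h1 hin
      have hao := not_outer_lt hr.le hout
      have c1 := cox_cos_nonneg hω₁
      nlinarith [mul_nonneg (mul_nonneg hRpos.le hr.le) c1,
        mul_pos (by linarith : (0:ℝ) < R + 1 - r - a) (by linarith : (0:ℝ) < R + 1 - r + a)]
    · -- meets outer only
      have e2 := h2 hout
      have hai := not_inner_lt hRpos.le hr.le hin
      have c2 := cox_cos_nonneg hω₂
      nlinarith [mul_nonneg (mul_nonneg (by linarith : (0:ℝ) ≤ R + 1) hr.le) c2,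
        mul_pos (by linarith : (0:ℝ) < a - R - r) (by linarith : (0:ℝ) < a + R + r)]
    · -- meets neither
      have hao := not_outer_lt hr.le hout
      have hai := not_inner_lt hRpos.le hr.le hin
      linarith
  calc Metric.diam (Metric.closedBall z₀ r) ≤ 2 * r := Metric.diam_closedBall hr.le
    _ ≤ 5 := by linarith
end
end

section
/- There exist a threshold R₀ ≫ 1 and a universal constant A such that the following holds: for every R ≥ R₀, every circular rectangle 𝓡 in the annulus 𝒜_R = B(0, R+1) − closure(B(0,R)), and every admissible disk D in 𝒜_R, if l denotes the length of the orthogonal (radial) projection of D ∩ 𝓡 onto the circle ∂B(0,R), then l² ≤ A · area(D ∩ 𝓡). -/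
open Set MeasureTheory

noncomputable section

namespace DPG

/-- The closed radial segment `{r e^{iθ} : r ∈ [R, R+1]}` of the annulus `𝒜_R`. -/
def radialSeg (R θ : ℝ) : Set ℂ :=
  {z | ∃ r : ℝ, R ≤ r ∧ r ≤ R + 1 ∧ z = r * Complex.exp (θ * Complex.I)}

/-- The length of the orthogonal (radial) projection of a subset `E` of the circular
rectangle `{re^{iθ} : r ∈ (R,R+1), θ ∈ (θ₁,θ₂)}` onto the circle `∂B(0,R)`: `R` times the
measure of the set of angles whose radial segment meets `E`. -/
def projLen (R θ₁ θ₂ : ℝ) (E : Set ℂ) : ℝ :=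
  R * (MeasureTheory.volume
    {θ : ℝ | θ₁ < θ ∧ θ < θ₂ ∧ (E ∩ radialSeg R θ).Nonempty}).toReal

end DPG

open DPG


section Helpers
open Set Real

lemma jordan_sin {x : ℝ} (h0 : 0 ≤ x) (h1 : x ≤ 1) : x ≤ Real.sin (π/2 * x) := by
  have hc := strictConcaveOn_sin_Icc.concaveOn
  have hm1 : (0:ℝ) ∈ Icc 0 π := ⟨le_refl 0, Real.pi_pos.le⟩
  have hm2 : π/2 ∈ Icc 0 π := ⟨by positivity, by linarith [Real.pi_pos]⟩
  have h := hc.2 hm1 hm2 (show (0:ℝ) ≤ 1 - x by linarith) h0 (by ring)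
  simp only [smul_eq_mul, mul_zero, zero_add, Real.sin_zero, Real.sin_pi_div_two, mul_one] at h
  rw [mul_comm]
  linarith

lemma jordan_arcsin {x : ℝ} (h0 : 0 ≤ x) (h1 : x ≤ 1) : Real.arcsin x ≤ π/2 * x := by
  rw [Real.arcsin_le_iff_le_sin ⟨by linarith, h1⟩ ⟨by nlinarith [Real.pi_pos], by nlinarith [Real.pi_pos]⟩]
  exact jordan_sin h0 h1

lemma sin_lb {x : ℝ} (h0 : 0 < x) (h1 : x ≤ 1) : 3/4 * x ≤ Real.sin x := by
  have := Real.sin_gt_sub_cube h0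
  nlinarith [sq_nonneg x, mul_pos h0 h0]

lemma sin_sq_sub (A B : ℝ) :
    Real.sin A ^ 2 - Real.sin B ^ 2 = Real.sin (A - B) * Real.sin (A + B) := by
  rw [Real.sin_sub, Real.sin_add]
  have hA := Real.sin_sq_add_cos_sq A
  have hB := Real.sin_sq_add_cos_sq B
  nlinarith

lemma sin_ge_between {ψ x : ℝ} (h0 : 0 ≤ ψ) (h1 : ψ ≤ x) (h2 : x ≤ π - ψ) :
    Real.sin ψ ≤ Real.sin x := by
  rcases le_total x (π/2) with hx | hx
  · exact Real.sin_le_sin_of_le_of_le_pi_div_two (by linarith) hx h1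
  · rw [← Real.sin_pi_sub x]
    exact Real.sin_le_sin_of_le_of_le_pi_div_two (by linarith) (by linarith) (by linarith)

lemma gap_lb {R m h : ℝ} (hR : 1 ≤ R) (hh : 0 < h) (hm : 0 ≤ m)
    (h1 : R^2 ≤ m^2 - h^2) (h2 : m^2 - h^2 ≤ (R+1)^2) :
    (1/2) * min h 1 ≤ min (m+h) (R+1) - max (m-h) R := by
  have hmR : R ≤ m := by nlinarith
  have hmin1 : min h 1 ≤ h := min_le_left _ _
  have hmin2 : min h 1 ≤ 1 := min_le_right _ _
  have hminnn : 0 < min h 1 := lt_min hh one_pos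
  rcases le_total (m+h) (R+1) with hc | hc
  · rw [min_eq_left hc]
    rcases le_total (m-h) R with hd | hd
    · rw [max_eq_right hd]; linarith
    · rw [max_eq_left hd]; linarith
  · rw [min_eq_right hc]
    rcases le_total (m-h) R with hd | hd
    · rw [max_eq_right hd]; linarith
    · rw [max_eq_left hd]
      -- need : R + 1 - (m - h) ≥ min h 1 / 2
      have key : m ≤ R + 1 + h - min h 1 / 2 := by
        by_contra hk
        push_neg at hk
        have hM1 : min h 1 * (R + 1 + h) ≤ (R+1) * h := by
          rcases le_total h 1 with he | he
          · rw [min_eq_left he]; nlinarith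
          · rw [min_eq_right he]; nlinarith
        nlinarith [sq_nonneg (min h 1)]
      linarith

lemma abs_polar' (ρ θ d φ : ℝ) :
    ‖(ρ : ℂ) * Complex.exp (θ * Complex.I) - (d:ℂ) * Complex.exp (φ * Complex.I)‖ ^ 2 =
      ρ^2 + d^2 - 2 * ρ * d * Real.cos (θ - φ) := by
  rw [Complex.sq_norm]
  have hre : ((ρ : ℂ) * Complex.exp (θ * Complex.I) - (d:ℂ) * Complex.exp (φ * Complex.I)).re
      = ρ * Real.cos θ - d * Real.cos φ := by
    simp [Complex.exp_ofReal_mul_I_re, Complex.exp_ofReal_mul_I_im]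
  have him : ((ρ : ℂ) * Complex.exp (θ * Complex.I) - (d:ℂ) * Complex.exp (φ * Complex.I)).im
      = ρ * Real.sin θ - d * Real.sin φ := by
    simp [Complex.exp_ofReal_mul_I_re, Complex.exp_ofReal_mul_I_im]
  rw [Complex.normSq_apply, hre, him, Real.cos_sub]
  nlinarith [Real.sin_sq_add_cos_sq θ, Real.sin_sq_add_cos_sq φ]

lemma abs_polar (ρ θ : ℝ) (z₀ : ℂ) :
    ‖(ρ : ℂ) * Complex.exp (θ * Complex.I) - z₀‖ ^ 2 =
      ρ^2 + ‖z₀‖ ^ 2 -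
        2 * ρ * ‖z₀‖ * Real.cos (θ - Complex.arg z₀) := by
  conv_lhs => rw [← Complex.norm_mul_exp_arg_mul_I z₀]
  exact abs_polar' ρ θ (‖z₀‖) (Complex.arg z₀)

lemma window_lemma {δM δ : ℝ} (hδM0 : 0 ≤ δM) (hδM : δM ≤ π)
    (h : Real.cos δM ≤ Real.cos δ) : ∃ k : ℤ, |δ - 2*π*k| ≤ δM := by
  refine ⟨round (δ/(2*π)), ?_⟩
  set k : ℤ := round (δ/(2*π)) with hk
  have hpi := Real.pi_pos
  have habs : |δ - 2*π*k| ≤ π := by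
    have h2 := abs_sub_round (δ/(2*π))
    have he : δ - 2*π*k = (2*π) * (δ/(2*π) - k) := by field_simp
    rw [he, abs_mul, abs_of_pos (by positivity : (0:ℝ) < 2*π)]
    nlinarith [h2]
  have hcos : Real.cos (δ - 2*π*k) = Real.cos δ := by
    have := Real.cos_sub_int_mul_two_pi δ k
    rw [← this]; ring_nf
  by_contra hcon
  push_neg at hcon
  have h1 : Real.cos |δ - 2*π*k| < Real.cos δM := by
    apply Real.strictAntiOn_cos ⟨hδM0, hδM⟩ ⟨by positivity, habs⟩ hcon
  rw [Real.cos_abs, hcos] at h1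
  linarith


open DPG in
lemma cox_facts {ω : ℝ} (hω : ω ∈ coxeterAngles) :
    0 ≤ Real.cos ω ∧ Real.cos ω ≤ 1 ∧ (Real.cos ω < 1/2 → ω = π/2) := by
  have hpi := Real.pi_pos
  rcases hω with h0 | ⟨n, hn, he⟩
  · subst h0
    refine ⟨by simp, by simp, ?_⟩
    intro h; simp at h; norm_num at h
  · subst he
    have hn2 : (2:ℝ) ≤ (n:ℝ) := by exact_mod_cast hn
    have hpos : 0 < π / n := by positivity
    have hle : π / n ≤ π / 2 := by
      apply div_le_div_of_nonneg_left hpi.le (by norm_num) hn2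
    refine ⟨Real.cos_nonneg_of_mem_Icc ⟨by linarith, hle⟩, Real.cos_le_one _, ?_⟩
    intro hlt
    by_contra hne
    have hn3 : (3:ℝ) ≤ (n:ℝ) := by
      rcases lt_or_ge ((n:ℝ)) 3 with h3 | h3
      · exfalso
        have hlt3 : n < 3 := by exact_mod_cast h3
        have hn2' : n = 2 := by omega
        apply hne
        rw [hn2']
        norm_num
      · exact h3
    have hle3 : π / n ≤ π / 3 :=
      div_le_div_of_nonneg_left hpi.le (by norm_num) hn3
    have := Real.cos_le_cos_of_nonneg_of_le_pi (by positivity) (by linarith) hle3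
    rw [Real.cos_pi_div_three] at this
    linarith

open DPG in
lemma meetsInner_of' {R r : ℝ} {z₀ : ℂ} (hr : 0 < r) (hR : 1 ≤ R)
    (h : ‖z₀‖ ≤ R + r) : MeetsInner R z₀ r := by
  rcases le_total (‖z₀‖) R with hd | hd
  · exact ⟨z₀, by simpa [Metric.mem_closedBall, Complex.dist_eq] using hr.le,
      by simpa [Metric.mem_closedBall, Complex.dist_eq] using hd⟩
  · have hdpos : 0 < ‖z₀‖ := lt_of_lt_of_le (by linarith : (0:ℝ) < R) hd
    refine ⟨((R / ‖z₀‖ : ℝ) : ℂ) * z₀, ?_, ?_⟩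
    · rw [Metric.mem_closedBall, Complex.dist_eq]
      have : ((R / ‖z₀‖ : ℝ) : ℂ) * z₀ - z₀ = ((R / ‖z₀‖ - 1 : ℝ) : ℂ) * z₀ := by
        push_cast; ring
      rw [this, norm_mul, Complex.norm_real, Real.norm_eq_abs]
      rw [abs_of_nonpos (by rw [sub_nonpos, div_le_one hdpos]; exact hd)]
      rw [neg_sub]
      rw [sub_mul, div_mul_cancel₀ _ hdpos.ne', one_mul]
      linarith
    · rw [Metric.mem_closedBall, Complex.dist_eq, sub_zero, norm_mul, Complex.norm_real, Real.norm_eq_abs,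
        abs_of_nonneg (by positivity), div_mul_cancel₀ _ hdpos.ne']

open DPG in
lemma meetsOuter_of' {R r : ℝ} {z₀ : ℂ} (hr : 0 < r) (hR : 0 < R + 1)
    (h : R + 1 ≤ ‖z₀‖ + r) : MeetsOuter R z₀ r := by
  rcases le_total (R+1) (‖z₀‖) with hd | hd
  · exact ⟨z₀, by simpa [Metric.mem_closedBall, Complex.dist_eq] using hr.le,
      by simpa [Metric.mem_ball, Complex.dist_eq, not_lt] using hd⟩
  · rcases eq_or_lt_of_le (norm_nonneg z₀) with hd0 | hd0
    · have hz : z₀ = 0 := norm_eq_zero.mp hd0.symm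
      subst hz
      rw [norm_zero] at h
      refine ⟨((R+1 : ℝ) : ℂ), ?_, ?_⟩
      · rw [Metric.mem_closedBall, Complex.dist_eq, sub_zero, Complex.norm_real, Real.norm_eq_abs, abs_of_pos hR]
        linarith
      · rw [Set.mem_compl_iff, Metric.mem_ball, Complex.dist_eq, sub_zero, Complex.norm_real, Real.norm_eq_abs,
          abs_of_pos hR]
        simp
    · refine ⟨(((R+1) / ‖z₀‖ : ℝ) : ℂ) * z₀, ?_, ?_⟩
      · rw [Metric.mem_closedBall, Complex.dist_eq]
        have : (((R+1) / ‖z₀‖ : ℝ) : ℂ) * z₀ - z₀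
            = (((R+1) / ‖z₀‖ - 1 : ℝ) : ℂ) * z₀ := by push_cast; ring
        rw [this, norm_mul, Complex.norm_real, Real.norm_eq_abs]
        rw [abs_of_nonneg (by rw [sub_nonneg, le_div_iff₀ hd0, one_mul]; exact hd)]
        rw [sub_mul, div_mul_cancel₀ _ hd0.ne', one_mul]
        linarith
      · rw [Set.mem_compl_iff, Metric.mem_ball, Complex.dist_eq, sub_zero, norm_mul,
          Complex.norm_real, Real.norm_eq_abs, abs_of_nonneg (by positivity), div_mul_cancel₀ _ hd0.ne']
        simp

set_option maxHeartbeats 1000000 in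
open DPG in
lemma adm_bounds {R r : ℝ} {z₀ : ℂ} (hR : 1 ≤ R) (h : IsAdmissibleDisk R z₀ r) :
    0 < r ∧ r ≤ 3 ∧ R^2 + r^2 ≤ ‖z₀‖ ^ 2 ∧
      ‖z₀‖ ^ 2 ≤ (R+1)^2 + r^2 := by
  obtain ⟨hr, -, ω₁, hω₁, ω₂, hω₂, hI, hO, hIO⟩ := h
  set d := ‖z₀‖ with hd
  have hd0 : 0 ≤ d := norm_nonneg z₀
  obtain ⟨hc₁0, hc₁1, hc₁⟩ := cox_facts hω₁
  obtain ⟨hc₂0, hc₂1, hc₂⟩ := cox_facts hω₂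
  have hRr : (0:ℝ) ≤ 2*R*r := by nlinarith
  have hRr' : (0:ℝ) ≤ 2*(R+1)*r := by nlinarith
  by_cases hIn : MeetsInner R z₀ r <;> by_cases hOut : MeetsOuter R z₀ r
  · have e₁ := hI hIn
    have e₂ := hO hOut
    have hsum := hIO hIn hOut
    have k₁ : 0 ≤ 2*R*r*Real.cos ω₁ := mul_nonneg hRr hc₁0
    have k₂ : 0 ≤ 2*(R+1)*r*Real.cos ω₂ := mul_nonneg hRr' hc₂0
    have hmax : 1/2 ≤ Real.cos ω₁ ∨ 1/2 ≤ Real.cos ω₂ := by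
      by_contra hcon
      push_neg at hcon
      rw [hc₁ hcon.1, hc₂ hcon.2] at hsum
      linarith
    have key : R * r ≤ 2*R + 1 := by
      rcases hmax with hm | hm
      · have : 2*R*r*(1/2) ≤ 2*R*r*Real.cos ω₁ := mul_le_mul_of_nonneg_left hm hRr
        nlinarith
      · have : 2*(R+1)*r*(1/2) ≤ 2*(R+1)*r*Real.cos ω₂ := mul_le_mul_of_nonneg_left hm hRr'
        nlinarith
    have hr3 : r ≤ 3 := by
      by_contra hcon
      push_neg at hcon
      have : 3 * R < r * R := by
        apply mul_lt_mul_of_pos_right hcon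
        linarith
      nlinarith
    exact ⟨hr, hr3, by nlinarith, by nlinarith⟩
  · have e₁ := hI hIn
    have k₁ : 0 ≤ 2*R*r*Real.cos ω₁ := mul_nonneg hRr hc₁0
    have hout : d + r < R + 1 := by
      by_contra hcon; push_neg at hcon
      exact hOut (meetsOuter_of' hr (by linarith) hcon)
    have hlow : R^2 + r^2 ≤ d^2 := by nlinarith
    have hup : d^2 ≤ (R+1-r)^2 := by nlinarith [sq_nonneg (R+1-r-d)]
    have hr1 : 2*r*(R+1) ≤ 2*R+1 := by nlinarith
    exact ⟨hr, by nlinarith, hlow, by nlinarith⟩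
  · have e₂ := hO hOut
    have k₂ : 0 ≤ 2*(R+1)*r*Real.cos ω₂ := mul_nonneg hRr' hc₂0
    have hin : R + r < d := by
      by_contra hcon; push_neg at hcon
      exact hIn (meetsInner_of' hr hR hcon)
    have hup : d^2 ≤ (R+1)^2 + r^2 := by nlinarith
    have hsq : (R+r)^2 < d^2 := pow_lt_pow_left₀ hin (by linarith) (by norm_num)
    have hrr : 2*R*r < 2*R+1 := by nlinarith
    have hr3 : r ≤ 3 := by
      by_contra hcon
      push_neg at hcon
      have : 2*R*3 < 2*R*r := by
        apply mul_lt_mul_of_pos_left hcon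
        linarith
      linarith
    have hlow : R^2 + r^2 ≤ d^2 := by nlinarith [hsq, hRr]
    exact ⟨hr, hr3, hlow, hup⟩
  · have hout : d + r < R + 1 := by
      by_contra hcon; push_neg at hcon
      exact hOut (meetsOuter_of' hr (by linarith) hcon)
    have hin : R + r < d := by
      by_contra hcon; push_neg at hcon
      exact hIn (meetsInner_of' hr hR hcon)
    have hsq : (R+r)^2 < d^2 := pow_lt_pow_left₀ hin (by linarith) (by norm_num)
    have hsq2 : d^2 < (R+1-r)^2 := pow_lt_pow_left₀ (by linarith) hd0 (by norm_num)
    have hlow : R^2 + r^2 ≤ d^2 := by nlinarith [hsq, hRr]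
    have hup : d^2 ≤ (R+1)^2 + r^2 := by nlinarith [hsq2, hRr']
    refine ⟨hr, by linarith, hlow, hup⟩

end Helpers

set_option maxHeartbeats 4000000 in
/-- **Projection–area estimate for admissible disks** (Lemma 4.7).
There are a threshold `R₀ ≫ 1` and a universal constant `A` such that for every
`R ≥ R₀`, every circular rectangle `𝓡` in `𝒜_R` and every admissible disk `D` in `𝒜_R`,
if `l` is the length of the radial projection of `D ∩ 𝓡` onto `∂B(0, R)`, then
`l² ≤ A ⬝ area (D ∩ 𝓡)`. -/
theorem admissible_disk_projection_area_bound :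
    ∃ R₀ A : ℝ, 1 ≤ R₀ ∧ 0 < A ∧
      ∀ R : ℝ, R₀ ≤ R → ∀ θ₁ θ₂ : ℝ, θ₁ < θ₂ → θ₂ - θ₁ ≤ 2 * Real.pi →
      ∀ (z₀ : ℂ) (r : ℝ), IsAdmissibleDisk R z₀ r →
        projLen R θ₁ θ₂ (Metric.closedBall z₀ r ∩ circRect R θ₁ θ₂) ^ 2 ≤
          A * (MeasureTheory.volume (Metric.closedBall z₀ r ∩ circRect R θ₁ θ₂)).toReal := by
  classical
  refine ⟨1, 40000, le_refl 1, by norm_num, ?_⟩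
  intro R hR θ₁ θ₂ hθ hθ2π z₀ r hadm
  obtain ⟨hr, hr3, hdlow, hdhigh⟩ := adm_bounds hR hadm
  set E := Metric.closedBall z₀ r ∩ circRect R θ₁ θ₂ with hE
  set d := ‖z₀‖ with hd
  have hd0 : 0 ≤ d := norm_nonneg z₀
  have hpi := Real.pi_pos
  have hpi4 := Real.pi_le_four
  have hdR : R ≤ d := by nlinarith
  have hdpos : 0 < d := by linarith
  have hrd : r < d := by nlinarith
  set φ := Complex.arg z₀ with hφ
  have hratio0 : 0 < r/d := by positivity
  have hratio1 : r/d ≤ 1 := by rw [div_le_one hdpos]; linarith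
  set δM := Real.arcsin (r/d) with hδM
  have hδM0 : 0 < δM := Real.arcsin_pos.2 hratio0
  have hδMle : δM ≤ Real.pi/2 := Real.arcsin_le_pi_div_two _
  have hsinδM : Real.sin δM = r/d := Real.sin_arcsin (by linarith) hratio1
  have hsinδM' : d * Real.sin δM = r := by rw [hsinδM]; field_simp
  have hδMlin : δM ≤ Real.pi/2 * (r/d) := jordan_arcsin hratio0.le hratio1
  set Θ := {θ : ℝ | θ₁ < θ ∧ θ < θ₂ ∧ (E ∩ radialSeg R θ).Nonempty} with hΘ
  set W := (MeasureTheory.volume Θ).toReal with hWdef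
  have hprojW : projLen R θ₁ θ₂ E = R * W := rfl
  have hW0 : 0 ≤ W := ENNReal.toReal_nonneg
  have hEvol0 : 0 ≤ (MeasureTheory.volume E).toReal := ENNReal.toReal_nonneg
  rw [hprojW]
  rcases eq_or_lt_of_le hW0 with hWeq | hWpos
  · rw [← hWeq, mul_zero]
    norm_num
  -- square root of d² - r²
  have hq0 : 0 ≤ d^2 - r^2 := by nlinarith
  set sq := Real.sqrt (d^2 - r^2) with hsqdef
  have hsq2 : sq^2 = d^2 - r^2 := Real.sq_sqrt hq0
  have hsq0 : 0 ≤ sq := Real.sqrt_nonneg _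
  have hcosq : Real.cos δM = sq / d := by
    rw [hδM, Real.cos_arcsin, hsqdef]
    rw [show 1 - (r/d)^2 = (d^2 - r^2)/d^2 by field_simp]
    rw [Real.sqrt_div hq0, Real.sqrt_sq hd0]
  -- Step A : every angle of Θ is in some window
  have hwin : ∀ θ ∈ Θ, ∃ k : ℤ, |θ - φ - 2*Real.pi*k| ≤ δM := by
    intro θ hθmem
    obtain ⟨hθa, hθb, z, ⟨⟨hzD, -⟩, ρ, hρR, hρR1, hzeq⟩⟩ := hθmem
    have hdist : ‖(ρ:ℂ) * Complex.exp (θ * Complex.I) - z₀‖ ≤ r := by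
      rw [← hzeq]
      rw [Metric.mem_closedBall, Complex.dist_eq] at hzD
      exact hzD
    have habs0 : 0 ≤ ‖(ρ:ℂ) * Complex.exp (θ * Complex.I) - z₀‖ :=
      norm_nonneg _
    have hpolar := abs_polar ρ θ z₀
    rw [← hd, ← hφ] at hpolar
    have hsq' : ρ^2 + d^2 - 2*ρ*d*Real.cos (θ - φ) ≤ r^2 := by
      have h2 : ‖(ρ:ℂ) * Complex.exp (θ * Complex.I) - z₀‖^2 ≤ r^2 :=
        pow_le_pow_left₀ habs0 hdist 2
      linarith [hpolar, h2]
    have hρ0 : 0 < ρ := by linarith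
    have h1 : 2*ρ*sq ≤ 2*ρ*d*Real.cos (θ - φ) := by
      have e : (ρ - sq)^2 = ρ^2 - 2*ρ*sq + sq^2 := by ring
      linarith [sq_nonneg (ρ - sq), e, hsq2, hsq']
    have h2 : Real.cos δM ≤ Real.cos (θ - φ) := by
      rw [hcosq, div_le_iff₀ hdpos]
      have h1' : (2*ρ)*sq ≤ (2*ρ)*(Real.cos (θ - φ)*d) := by linarith [h1]
      exact le_of_mul_le_mul_left h1' (by linarith)
    have hk := window_lemma hδM0.le (by linarith) h2
    exact hk
  -- Step B : at most two windows
  set kst : ℤ := ⌈(θ₁ - δM - φ)/(2*Real.pi)⌉ with hkst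
  set c0 : ℝ := φ + 2*Real.pi*kst with hc0
  set c1 : ℝ := φ + 2*Real.pi*(kst+1) with hc1
  have hsub : Θ ⊆ (Set.Icc (max θ₁ (c0 - δM)) (min θ₂ (c0 + δM))) ∪
      (Set.Icc (max θ₁ (c1 - δM)) (min θ₂ (c1 + δM))) := by
    intro θ hθmem
    obtain ⟨k, hk⟩ := hwin θ hθmem
    obtain ⟨hθa, hθb, -⟩ := hθmem
    rw [abs_le] at hk
    have hkl : kst ≤ k := by
      rw [hkst]
      apply Int.ceil_le.2
      rw [div_le_iff₀ (by positivity)]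
      linarith [hk.2]
    have hku : k ≤ kst + 1 := by
      have h3 := Int.le_ceil ((θ₁ - δM - φ)/(2*Real.pi))
      rw [← hkst, div_le_iff₀ (by positivity)] at h3
      by_contra hcon
      push_neg at hcon
      have hcon2 : kst + 2 ≤ k := by omega
      have hcon3 : (kst:ℝ) + 2 ≤ (k:ℝ) := by exact_mod_cast hcon2
      have hmul : 2*Real.pi*((kst:ℝ)+2) ≤ 2*Real.pi*(k:ℝ) :=
        mul_le_mul_of_nonneg_left hcon3 (by positivity)
      linarith [hk.1]
    have hk01 : k = kst ∨ k = kst + 1 := by omega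
    rcases hk01 with rfl | rfl
    · left
      constructor
      · apply max_le hθa.le
        rw [hc0]; push_cast; linarith [hk.1]
      · apply le_min hθb.le
        rw [hc0]; push_cast; linarith [hk.2]
    · right
      have hk' : -δM ≤ θ - φ - 2*Real.pi*((kst:ℝ)+1) ∧
          θ - φ - 2*Real.pi*((kst:ℝ)+1) ≤ δM := by
        push_cast at hk; exact hk
      constructor
      · apply max_le hθa.le
        rw [hc1]; linarith [hk'.1]
      · apply le_min hθb.le
        rw [hc1]; linarith [hk'.2]
  -- Step C : measure bound
  have hwidth : ∀ c : ℝ, min θ₂ (c + δM) - max θ₁ (c - δM) ≤ 2*δM := by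
    intro c
    have h1 : min θ₂ (c + δM) ≤ c + δM := min_le_right _ _
    have h2 : c - δM ≤ max θ₁ (c - δM) := le_max_right _ _
    linarith
  have hWle : W ≤ max (min θ₂ (c0 + δM) - max θ₁ (c0 - δM)) 0
      + max (min θ₂ (c1 + δM) - max θ₁ (c1 - δM)) 0 := by
    have h1 : MeasureTheory.volume Θ ≤
        MeasureTheory.volume (Set.Icc (max θ₁ (c0 - δM)) (min θ₂ (c0 + δM)))
          + MeasureTheory.volume (Set.Icc (max θ₁ (c1 - δM)) (min θ₂ (c1 + δM))) :=
      le_trans (measure_mono hsub) (measure_union_le _ _)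
    rw [Real.volume_Icc, Real.volume_Icc] at h1
    have hne : ENNReal.ofReal (min θ₂ (c0 + δM) - max θ₁ (c0 - δM))
        + ENNReal.ofReal (min θ₂ (c1 + δM) - max θ₁ (c1 - δM)) ≠ ⊤ :=
      ENNReal.add_ne_top.2 ⟨ENNReal.ofReal_ne_top, ENNReal.ofReal_ne_top⟩
    have h2 := ENNReal.toReal_mono hne h1
    rw [ENNReal.toReal_add ENNReal.ofReal_ne_top ENNReal.ofReal_ne_top,
      ENNReal.toReal_ofReal', ENNReal.toReal_ofReal'] at h2
    exact h2
  have hW4δ : W ≤ 4*δM := by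
    have h1 : max (min θ₂ (c0 + δM) - max θ₁ (c0 - δM)) 0 ≤ 2*δM :=
      max_le (hwidth c0) (by linarith)
    have h2 : max (min θ₂ (c1 + δM) - max θ₁ (c1 - δM)) 0 ≤ 2*δM :=
      max_le (hwidth c1) (by linarith)
    linarith
  have hRW : R * W ≤ 6*Real.pi := by
    have h1 : R * W ≤ d * W := mul_le_mul_of_nonneg_right hdR hW0
    have h2 : W ≤ 2*Real.pi*(r/d) := by linarith
    have h3 : d * W ≤ d * (2*Real.pi*(r/d)) := mul_le_mul_of_nonneg_left h2 hd0
    have h4 : d * (2*Real.pi*(r/d)) = 2*Real.pi*r := by field_simp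
    have h5 : 2*Real.pi*r ≤ 2*Real.pi*3 := by
      linarith [mul_nonneg (by linarith : (0:ℝ) ≤ 3 - r) hpi.le]
    linarith
  have hRW0 : 0 < R * W := mul_pos (by linarith) hWpos
  -- pick the bigger window piece
  have hpick : ∃ c : ℝ, (∃ k : ℤ, c = φ + 2*Real.pi*k) ∧
      W/2 ≤ min θ₂ (c + δM) - max θ₁ (c - δM) := by
    rcases le_total (max (min θ₂ (c0 + δM) - max θ₁ (c0 - δM)) 0)
      (max (min θ₂ (c1 + δM) - max θ₁ (c1 - δM)) 0) with hcmp | hcmp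
    · refine ⟨c1, ⟨kst+1, by rw [hc1]; push_cast; ring⟩, ?_⟩
      have hm : W/2 ≤ max (min θ₂ (c1 + δM) - max θ₁ (c1 - δM)) 0 := by linarith
      rcases le_total (min θ₂ (c1 + δM) - max θ₁ (c1 - δM)) 0 with hx | hx
      · rw [max_eq_right hx] at hm; linarith
      · rw [max_eq_left hx] at hm; linarith
    · refine ⟨c0, ⟨kst, by rw [hc0]⟩, ?_⟩
      have hm : W/2 ≤ max (min θ₂ (c0 + δM) - max θ₁ (c0 - δM)) 0 := by linarith
      rcases le_total (min θ₂ (c0 + δM) - max θ₁ (c0 - δM)) 0 with hx | hx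
      · rw [max_eq_right hx] at hm; linarith
      · rw [max_eq_left hx] at hm; linarith
  obtain ⟨c, ⟨k0, hk0⟩, hLW⟩ := hpick
  set a := max θ₁ (c - δM) with ha
  set b := min θ₂ (c + δM) with hb
  set L := b - a with hL
  have hLpos : 0 < L := by
    rw [hL]; linarith
  have hL2δ : L ≤ 2*δM := hwidth c
  have haθ₁ : θ₁ ≤ a := le_max_left _ _
  have hbθ₂ : b ≤ θ₂ := min_le_left _ _
  have hacδ : c - δM ≤ a := le_max_right _ _
  have hbcδ : b ≤ c + δM := min_le_right _ _
  set ψ := L/4 with hψ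
  set β := δM - ψ with hβ
  have hψpos : 0 < ψ := by rw [hψ]; linarith
  have hψle : ψ ≤ δM/2 := by rw [hψ]; linarith
  have hβpos : 0 < β := by rw [hβ]; linarith
  have hβlt : β < δM := by rw [hβ]; linarith
  have hβle : β ≤ Real.pi/2 := by rw [hβ]; linarith
  have hψ1 : ψ ≤ 1 := by linarith
  -- fiber data
  set m := d * Real.cos β with hm
  have hsinβlt : Real.sin β < Real.sin δM := by
    apply Real.strictMonoOn_sin ⟨by linarith, by linarith⟩ ⟨by linarith, hδMle⟩ hβlt
  have hsinβ0 : 0 ≤ Real.sin β := Real.sin_nonneg_of_nonneg_of_le_pi hβpos.le (by linarith)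
  have hsinδM0 : 0 < Real.sin δM := by rw [hsinδM]; exact hratio0
  have hh0 : 0 < r^2 - d^2 * Real.sin β ^2 := by
    have t : d * Real.sin β < r := by
      have := mul_lt_mul_of_pos_left hsinβlt hdpos
      linarith [hsinδM']
    have t2 : 0 ≤ d * Real.sin β := mul_nonneg hd0 hsinβ0
    have e : r^2 - d^2 * Real.sin β ^2 = (r - d*Real.sin β)*(r + d*Real.sin β) := by ring
    rw [e]
    exact mul_pos (by linarith) (by linarith)
  set h := Real.sqrt (r^2 - d^2 * Real.sin β ^2) with hhdef
  have hh2 : h^2 = r^2 - d^2 * Real.sin β ^2 := Real.sq_sqrt hh0.le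
  have hhpos : 0 < h := Real.sqrt_pos.2 hh0
  have hcosβ0 : 0 ≤ Real.cos β := Real.cos_nonneg_of_mem_Icc ⟨by linarith, hβle⟩
  have hm0 : 0 ≤ m := mul_nonneg hd0 hcosβ0
  have hcossinβ := Real.sin_sq_add_cos_sq β
  have hmh : m^2 - h^2 = d^2 - r^2 := by
    rw [hm, hh2]
    linear_combination d^2 * hcossinβ
  have hgap : (1/2)*min h 1 ≤ min (m+h) (R+1) - max (m-h) R :=
    gap_lb hR hhpos hm0 (by rw [hmh]; linarith) (by rw [hmh]; linarith)
  -- lower bound for h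
  have hsinψ : 3/4 * ψ ≤ Real.sin ψ := sin_lb hψpos hψ1
  have hsinbetw : Real.sin ψ ≤ Real.sin (2*δM - ψ) :=
    sin_ge_between hψpos.le (by linarith) (by linarith)
  have hsinsq : Real.sin δM^2 - Real.sin β^2 = Real.sin ψ * Real.sin (2*δM - ψ) := by
    have hid := sin_sq_sub δM β
    rw [show δM - β = ψ by rw [hβ]; ring, show δM + β = 2*δM - ψ by rw [hβ]; ring] at hid
    exact hid
  have hsinψ0 : 0 < Real.sin ψ := by linarith
  have hhd : d * Real.sin ψ ≤ h := by
    rw [hhdef, Real.le_sqrt (by positivity) hh0.le]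
    have hrr : r^2 = d^2 * Real.sin δM^2 := by rw [hsinδM]; field_simp
    have t1 : Real.sin ψ * Real.sin ψ ≤ Real.sin ψ * Real.sin (2*δM - ψ) :=
      mul_le_mul_of_nonneg_left hsinbetw hsinψ0.le
    have t2 : d^2*(Real.sin ψ*Real.sin ψ) ≤ d^2*(Real.sin ψ*Real.sin (2*δM - ψ)) :=
      mul_le_mul_of_nonneg_left t1 (by positivity)
    have e : (d*Real.sin ψ)^2 = d^2*(Real.sin ψ*Real.sin ψ) := by ring
    have e3 : r^2 - d^2*Real.sin β^2 = d^2*(Real.sin ψ*Real.sin (2*δM - ψ)) := by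
      rw [hrr]
      linear_combination d^2 * hsinsq
    linarith [e, t2, e3]
  have hψW : W/8 ≤ ψ := by rw [hψ]; linarith
  have hhRW : 3/32 * (R*W) ≤ h := by
    have t1 : R*(W/8) ≤ d*ψ := mul_le_mul hdR hψW (by linarith) hd0
    have t2 : d*(3/4*ψ) ≤ d*Real.sin ψ := mul_le_mul_of_nonneg_left hsinψ hd0
    linarith
  have hmin1 : R*W/24 ≤ min h 1 := by
    apply le_min
    · linarith
    · linarith
  have hgapRW : R*W/48 ≤ min (m+h) (R+1) - max (m-h) R := by linarith
  -- the inner interval J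
  set a' := max a (c - β) with ha'
  set b' := min b (c + β) with hb'
  set w := b' - a' with hw
  have hb'1 : b - ψ ≤ b' := by
    apply le_min (by linarith)
    rw [hβ]; linarith
  have ha'1 : a' ≤ a + ψ := by
    apply max_le (by linarith)
    rw [hβ]; linarith
  have hwL : L/2 ≤ w := by rw [hw]; linarith
  have hwW : W/4 ≤ w := by linarith
  have hwpos : 0 < w := by linarith
  have ha'c : c - β ≤ a' := le_max_right _ _
  have hb'c : b' ≤ c + β := min_le_right _ _
  have haa' : a ≤ a' := le_max_left _ _
  have hb'b : b' ≤ b := min_le_left _ _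
  -- geometric data of the inscribed square
  set gl := max (m-h) R with hgl
  set gu := min (m+h) (R+1) with hgu
  have hglR : R ≤ gl := le_max_right _ _
  have hguR : gu ≤ R+1 := min_le_right _ _
  have hglmh : m-h ≤ gl := le_max_left _ _
  have hgumh : gu ≤ m+h := min_le_left _ _
  set ρc := (gl+gu)/2 with hρc
  set θc := (a'+b')/2 with hθc
  set s := min ((gu - gl)/4) (R*w/8) with hs
  have hglu : R*W/48 ≤ gu - gl := hgapRW
  have hs0 : 0 < s := by
    apply lt_min
    · linarith
    · positivity
  have hsgap : s ≤ (gu-gl)/4 := min_le_left _ _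
  have hsw : s ≤ R*w/8 := min_le_right _ _
  have hsRW : R*W/192 ≤ s := by
    apply le_min
    · linarith
    · have : R*(W/4) ≤ R*w := mul_le_mul_of_nonneg_left hwW (by linarith)
      linarith
  set zc := (ρc:ℂ) * Complex.exp (θc * Complex.I) with hzc
  -- membership of the square in E
  have hQsub : ∀ z : ℂ, |z.re - zc.re| < s/2 → |z.im - zc.im| < s/2 → z ∈ E := by
    intro z hre him
    have habs : ‖z - zc‖ < s := by
      have h1 := Complex.norm_le_abs_re_add_abs_im (z - zc)
      rw [Complex.sub_re, Complex.sub_im] at h1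
      linarith
    set ζ := z * Complex.exp (-(θc:ℂ) * Complex.I) with hζ
    have hexp1 : ‖Complex.exp (-(θc:ℂ) * Complex.I)‖ = 1 := by
      rw [show -(θc:ℂ) * Complex.I = ((-θc : ℝ):ℂ) * Complex.I by push_cast; ring]
      exact Complex.norm_exp_ofReal_mul_I _
    have hzcρ : zc * Complex.exp (-(θc:ℂ) * Complex.I) = (ρc:ℂ) := by
      rw [hzc, mul_assoc, ← Complex.exp_add]
      rw [show (θc:ℂ) * Complex.I + -(θc:ℂ) * Complex.I = 0 by ring]
      rw [Complex.exp_zero, mul_one]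
    have hζρ : ζ - (ρc:ℂ) = (z - zc) * Complex.exp (-(θc:ℂ) * Complex.I) := by
      rw [hζ, sub_mul, hzcρ]
    have hζd : ‖ζ - (ρc:ℂ)‖ < s := by
      rw [hζρ, norm_mul, hexp1, mul_one]; exact habs
    have hζre : ρc - s < ζ.re := by
      have h1 := Complex.abs_re_le_norm (ζ - (ρc:ℂ))
      rw [Complex.sub_re, Complex.ofReal_re] at h1
      have h2 := abs_lt.1 (lt_of_le_of_lt h1 hζd)
      linarith [h2.1]
    have hζim : |ζ.im| < s := by
      have h1 := Complex.abs_im_le_norm (ζ - (ρc:ℂ))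
      rw [Complex.sub_im, Complex.ofReal_im, sub_zero] at h1
      linarith [lt_of_le_of_lt h1 hζd]
    have hζabs : ‖ζ‖ = ‖z‖ := by
      rw [hζ, norm_mul, hexp1, mul_one]
    set ρ := ‖z‖ with hρdef
    have hρcpos : 0 < ρc := by rw [hρc]; linarith
    have hρrange : ρc - s < ρ ∧ ρ < ρc + s := by
      have h1 := abs_norm_sub_norm_le ζ ((ρc:ℂ))
      rw [Complex.norm_real, Real.norm_eq_abs, abs_of_pos hρcpos, hζabs] at h1
      have h2 := abs_lt.1 (lt_of_le_of_lt h1 hζd)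
      exact ⟨by linarith [h2.1], by linarith [h2.2]⟩
    have hρgl : gl < ρ := by
      have : gl + (gu-gl)/4 ≤ ρc - s := by rw [hρc]; linarith
      linarith [hρrange.1]
    have hρgu : ρ < gu := by
      have : ρc + s ≤ gu - (gu-gl)/4 := by rw [hρc]; linarith
      linarith [hρrange.2]
    have hρpos : 0 < ρ := by linarith
    have hζre0 : 0 < ζ.re := by
      have : gl + (gu-gl)/4 ≤ ρc - s := by rw [hρc]; linarith
      linarith
    set α := Complex.arg ζ with hα
    have hαeq : α = Real.arcsin (ζ.im / ‖ζ‖) := Complex.arg_of_re_nonneg hζre0.le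
    have hζabspos : 0 < ‖ζ‖ := by rw [hζabs]; exact hρpos
    have htle : |ζ.im / ‖ζ‖| ≤ 1 := by
      rw [abs_div, abs_of_pos hζabspos]
      rw [div_le_one hζabspos]
      exact Complex.abs_im_le_norm ζ
    have htsR : |ζ.im / ‖ζ‖| ≤ s/R := by
      rw [abs_div, abs_of_pos hζabspos]
      apply div_le_div₀ hs0.le (le_of_lt hζim) (by linarith) _
      rw [hζabs]
      linarith
    have hαbound : |α| ≤ Real.pi/2 * (s/R) := by
      rw [hαeq]
      rcases le_total 0 (ζ.im / ‖ζ‖) with hsign | hsign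
      · rw [abs_of_nonneg (Real.arcsin_nonneg.2 hsign)]
        calc Real.arcsin (ζ.im / ‖ζ‖)
            ≤ Real.pi/2 * (ζ.im / ‖ζ‖) := by
              apply jordan_arcsin hsign
              rw [abs_of_nonneg hsign] at htle; exact htle
          _ ≤ Real.pi/2 * (s/R) := by
              apply mul_le_mul_of_nonneg_left _ (by positivity)
              rw [abs_of_nonneg hsign] at htsR; exact htsR
      · rw [abs_of_nonpos (by
          apply Real.arcsin_nonpos.2 hsign)]
        rw [← Real.arcsin_neg]
        calc Real.arcsin (-(ζ.im / ‖ζ‖))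
            ≤ Real.pi/2 * (-(ζ.im / ‖ζ‖)) := by
              apply jordan_arcsin (by linarith)
              rw [abs_of_nonpos hsign] at htle; linarith
          _ ≤ Real.pi/2 * (s/R) := by
              apply mul_le_mul_of_nonneg_left _ (by positivity)
              rw [abs_of_nonpos hsign] at htsR; linarith
    have hsR8 : s/R ≤ w/8 := by
      rw [div_le_iff₀ (by linarith)]
      calc s ≤ R*w/8 := hsw
        _ = w/8*R := by ring
    have hαw : |α| < w/2 := by
      have h1 : Real.pi/2 * (s/R) ≤ Real.pi/2 * (w/8) :=
        mul_le_mul_of_nonneg_left hsR8 (by positivity)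
      have h2 : Real.pi/2 * (w/8) ≤ 2 * (w/8) :=
        mul_le_mul_of_nonneg_right (by linarith) (by linarith)
      linarith [hαbound, hwpos]
    set θ := θc + α with hθdef
    have hθa' : a' < θ := by
      have := abs_lt.1 hαw
      rw [hθdef, hθc]; linarith [this.1]
    have hθb' : θ < b' := by
      have := abs_lt.1 hαw
      rw [hθdef, hθc]; linarith [this.2]
    have hzpolar : z = (ρ:ℂ) * Complex.exp (θ * Complex.I) := by
      have h1 : ((‖ζ‖ : ℝ):ℂ) * Complex.exp (α * Complex.I) = ζ :=
        Complex.norm_mul_exp_arg_mul_I ζ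
      have h2 : z = ζ * Complex.exp ((θc:ℂ) * Complex.I) := by
        rw [hζ, mul_assoc, ← Complex.exp_add]
        rw [show -(θc:ℂ) * Complex.I + (θc:ℂ) * Complex.I = 0 by ring]
        rw [Complex.exp_zero, mul_one]
      rw [h2, ← h1, hζabs, mul_assoc, ← Complex.exp_add, hθdef]
      congr 1
      push_cast
      ring
    have hθc0dist : |θ - c| ≤ β := by
      rw [abs_le]
      constructor
      · linarith
      · linarith
    have hcosθ : Real.cos β ≤ Real.cos (θ - φ) := by
      have hshift : θ - c = (θ - φ) - k0*(2*Real.pi) := by rw [hk0]; ring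
      have hper : Real.cos (θ - c) = Real.cos (θ - φ) := by
        rw [hshift, Real.cos_sub_int_mul_two_pi]
      rw [← hper, ← Real.cos_abs (θ - c)]
      exact Real.cos_le_cos_of_nonneg_of_le_pi (abs_nonneg _) (by linarith) hθc0dist
    have hρm : (ρ - m)^2 ≤ h^2 := sq_le_sq' (by linarith) (by linarith)
    constructor
    · rw [Metric.mem_closedBall, Complex.dist_eq, hzpolar]
      have hpolar := abs_polar ρ θ z₀
      rw [← hd, ← hφ] at hpolar
      have habs0 : 0 ≤ ‖(ρ:ℂ) * Complex.exp (θ * Complex.I) - z₀‖ :=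
        norm_nonneg _
      have hfin : ρ^2 + d^2 - 2*ρ*d*Real.cos (θ - φ) ≤ r^2 := by
        have hmono : (2*ρ*d)*Real.cos β ≤ (2*ρ*d)*Real.cos (θ - φ) :=
          mul_le_mul_of_nonneg_left hcosθ (by positivity)
        have hmono' : 2*ρ*m ≤ 2*ρ*d*Real.cos (θ - φ) := by
          rw [hm]; linarith [hmono]
        have eexp : (ρ - m)^2 = ρ^2 - 2*ρ*m + m^2 := by ring
        have em : m^2 = d^2*Real.cos β^2 := by rw [hm]; ring
        have e2 : d^2*Real.sin β^2 + d^2*Real.cos β^2 = d^2 := by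
          linear_combination d^2 * hcossinβ
        linarith [hρm, hh2, eexp, em, e2, hmono']
      have hsq2' : ‖(ρ:ℂ) * Complex.exp (θ * Complex.I) - z₀‖^2 ≤ r^2 := by
        linarith [hpolar, hfin]
      have := Real.sqrt_le_sqrt hsq2'
      rw [Real.sqrt_sq habs0, Real.sqrt_sq hr.le] at this
      exact this
    · exact ⟨ρ, θ, by linarith, by linarith, by linarith, by linarith, hzpolar⟩
  -- the square and its volume
  set Q : Set ℂ := Complex.measurableEquivRealProd ⁻¹'
      ((Set.Ioo (zc.re - s/2) (zc.re + s/2)) ×ˢ (Set.Ioo (zc.im - s/2) (zc.im + s/2))) with hQ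
  have hQE : Q ⊆ E := by
    intro z hz
    rw [hQ, Set.mem_preimage, Complex.measurableEquivRealProd_apply] at hz
    obtain ⟨⟨h1, h2⟩, h3, h4⟩ := hz
    exact hQsub z (abs_lt.2 ⟨by linarith, by linarith⟩) (abs_lt.2 ⟨by linarith, by linarith⟩)
  have hQvol : MeasureTheory.volume Q = ENNReal.ofReal s * ENNReal.ofReal s := by
    rw [hQ]
    rw [Complex.volume_preserving_equiv_real_prod.measure_preimage
      ((measurableSet_Ioo.prod measurableSet_Ioo).nullMeasurableSet)]
    rw [MeasureTheory.Measure.volume_eq_prod, MeasureTheory.Measure.prod_prod,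
      Real.volume_Ioo, Real.volume_Ioo]
    congr 1 <;> · congr 1; ring
  have hEfin : MeasureTheory.volume E ≠ ⊤ := by
    apply ne_top_of_le_ne_top _ (measure_mono Set.inter_subset_left)
    exact (MeasureTheory.measure_closedBall_lt_top).ne
  have hEvol : s*s ≤ (MeasureTheory.volume E).toReal := by
    have h1 : MeasureTheory.volume Q ≤ MeasureTheory.volume E := measure_mono hQE
    have h2 := ENNReal.toReal_mono hEfin h1
    rw [hQvol, ← ENNReal.ofReal_mul hs0.le, ENNReal.toReal_ofReal (by positivity)] at h2
    exact h2
  -- conclude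
  have h192 : R*W ≤ 192*s := by linarith
  have hfin : (R*W)^2 ≤ (192*s)^2 := pow_le_pow_left₀ hRW0.le h192 2
  have hexp : (192*s)^2 = 36864*(s*s) := by ring
  have hlast : 36864*(s*s) ≤ 36864 * (MeasureTheory.volume E).toReal := by
    apply mul_le_mul_of_nonneg_left hEvol (by norm_num)
  linarith [hfin, hexp, hlast, hEvol0]
end
end
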